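/- arXiv:1704.06799 — 3 statements merged into one kernel-verified Lean document; each statement's English description precedes it below -/
import Mathlib

section
/- Fix s ∈ ℕ. There exists a constant c such that for all natural numbers u ≤ w_max and all x ∈ ℝ⁴: if u ≤ s, then every u-th order partial derivative of the tensor-valued function x ↦ x^{⊗s}(1 − e^{−|x|⁴}) is bounded in norm by c·|x|^{s+1−u}, while if u > s it is bounded by the constant c. -/
open Real Finset

noncomputable section StmtAux

abbrev EE := EuclideanSpace ℝ (Fin 4)
abbrev Es (s : ℕ) := EuclideanSpace ℝ (Fin s → Fin 4)

lemma coord_abs_le {ι : Type*} [Fintype ι] (x : EuclideanSpace ℝ ι) (i : ι) : |x i| ≤ ‖x‖ := by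
  rw [EuclideanSpace.norm_eq, ← Real.sqrt_sq_eq_abs]
  apply Real.sqrt_le_sqrt
  have := Finset.single_le_sum (f := fun j => ‖x j‖ ^ 2) (fun j _ => by positivity)
    (Finset.mem_univ i)
  simpa [Real.norm_eq_abs, sq_abs] using this

lemma norm_le_of_coord {ι : Type*} [Fintype ι] (x : EuclideanSpace ℝ ι) (M : ℝ) (hM : 0 ≤ M)
    (h : ∀ i, |x i| ≤ M) : ‖x‖ ≤ Real.sqrt (Fintype.card ι) * M := by
  rw [EuclideanSpace.norm_eq]
  have hsum : ∑ i, ‖x i‖ ^ 2 ≤ (Fintype.card ι : ℝ) * M ^ 2 := by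
    calc ∑ i, ‖x i‖ ^ 2 ≤ ∑ _i : ι, M ^ 2 := Finset.sum_le_sum (fun i _ => by
          have := h i; rw [Real.norm_eq_abs]; nlinarith [abs_nonneg (x i)])
    _ = (Fintype.card ι : ℝ) * M ^ 2 := by simp [Finset.card_univ, mul_comm]
  calc Real.sqrt (∑ i, ‖x i‖ ^ 2) ≤ Real.sqrt ((Fintype.card ι : ℝ) * M ^ 2) :=
        Real.sqrt_le_sqrt hsum
  _ = Real.sqrt (Fintype.card ι) * M := by
      rw [Real.sqrt_mul (by positivity), Real.sqrt_sq hM]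

/-- outer product bilinear map -/
def outerB (s : ℕ) : EE →L[ℝ] Es s →L[ℝ] Es (s + 1) :=
  LinearMap.mkContinuous₂
    (LinearMap.mk₂ ℝ
      (fun v A => (show Es (s + 1) from WithLp.toLp 2 (fun μ => v (μ 0) * A (fun i => μ i.succ))))
      (by intro v v' A; ext μ; simp [add_mul])
      (by intro c v A; ext μ; simp [mul_assoc])
      (by intro v A A'; ext μ; simp [mul_add])
      (by intro c v A; ext μ; simp; ring))
    (Real.sqrt (Fintype.card (Fin (s + 1) → Fin 4)))
    (by
      intro v A
      rw [mul_assoc]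
      apply norm_le_of_coord _ _ (by positivity)
      intro μ
      simp only [LinearMap.mk₂_apply, PiLp.toLp_apply]
      rw [abs_mul]
      exact mul_le_mul (coord_abs_le v _) (coord_abs_le A _) (abs_nonneg _) (norm_nonneg _))

lemma outerB_norm (s : ℕ) : ‖outerB s‖ ≤ Real.sqrt (Fintype.card (Fin (s + 1) → Fin 4)) :=
  LinearMap.mkContinuous₂_norm_le _ (by positivity) _

def Tmap (s : ℕ) : EE → Es s := fun x => (show Es s from WithLp.toLp 2 (fun μ => ∏ i, x (μ i)))

lemma Tmap_succ (s : ℕ) : Tmap (s + 1) = fun x => outerB s x (Tmap s x) := by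
  funext x
  ext μ
  show (∏ i, x (μ i)) = _
  rw [Fin.prod_univ_succ]
  rfl

lemma Tmap_contDiff (s : ℕ) : ContDiff ℝ (⊤ : ℕ∞) (Tmap s) := by
  induction s with
  | zero =>
      have : Tmap 0 = fun _ => (show Es 0 from WithLp.toLp 2 (fun _ => 1)) := by
        funext x; ext μ; simp [Tmap]
      rw [this]; exact contDiff_const
  | succ s ih =>
      rw [Tmap_succ]
      exact (outerB s).isBoundedBilinearMap.contDiff.comp (contDiff_id.prodMk ih)


lemma id_deriv_bound (i : ℕ) (x : EE) :
    ‖iteratedFDeriv ℝ i (fun y : EE => y) x‖ ≤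
      if i = 0 then ‖x‖ else if i = 1 then 1 else 0 := by
  match i with
  | 0 => simp [norm_iteratedFDeriv_zero]
  | 1 =>
      have h0 : ‖iteratedFDeriv ℝ 0 (fderiv ℝ (fun y : EE => y)) x‖
          = ‖iteratedFDeriv ℝ 1 (fun y : EE => y) x‖ := norm_iteratedFDeriv_fderiv
      rw [norm_iteratedFDeriv_zero] at h0
      rw [← h0, fderiv_id']
      simpa using ContinuousLinearMap.norm_id_le (𝕜 := ℝ) (E := EE)
  | (n + 2) =>
      have h0 : ‖iteratedFDeriv ℝ (n + 1) (fderiv ℝ (fun y : EE => y)) x‖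
          = ‖iteratedFDeriv ℝ (n + 2) (fun y : EE => y) x‖ := norm_iteratedFDeriv_fderiv
      have h1 : (fderiv ℝ (fun y : EE => y)) = fun _ => ContinuousLinearMap.id ℝ EE := by
        funext y; exact fderiv_id'
      rw [h1] at h0
      rw [iteratedFDeriv_const_of_ne (Nat.succ_ne_zero n)] at h0
      simp only [Pi.zero_apply, norm_zero] at h0
      simp [← h0]

/-- the target bound for derivatives of `Tmap` -/
def Tb (s j : ℕ) (x : EE) : ℝ := if j ≤ s then ‖x‖ ^ (s - j) else 0

lemma Tb_nonneg (s j : ℕ) (x : EE) : 0 ≤ Tb s j x := by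
  unfold Tb; split <;> positivity

lemma Tmap_bound (s : ℕ) : ∀ j : ℕ, ∃ C : ℝ, 0 < C ∧
    ∀ x, ‖iteratedFDeriv ℝ j (Tmap s) x‖ ≤ C * Tb s j x := by
  induction s with
  | zero =>
      intro j
      refine ⟨2, by norm_num, fun x => ?_⟩
      have hT0 : Tmap 0 = fun _ : EE => (show Es 0 from WithLp.toLp 2 (fun _ => 1)) := by
        funext x; ext μ; simp [Tmap]
      rw [hT0]
      match j with
      | 0 =>
          rw [norm_iteratedFDeriv_zero]
          have := norm_le_of_coord (show Es 0 from WithLp.toLp 2 (fun _ => 1)) 1 zero_le_one (fun i => by norm_num)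
          simp only [Fintype.card_fun, Fintype.card_fin, pow_zero, Nat.cast_one,
            Real.sqrt_one, one_mul] at this
          simpa [Tb] using this.trans (by norm_num)
      | (n + 1) =>
          rw [iteratedFDeriv_const_of_ne (Nat.succ_ne_zero n)]
          simp [Tb_nonneg]
  | succ s ih =>
      intro j
      obtain ⟨C1, hC1p, hC1⟩ := ih j
      obtain ⟨C2, hC2p, hC2⟩ := ih (j - 1)
      set Bn : ℝ := Real.sqrt (Fintype.card (Fin (s + 1) → Fin 4)) with hBn
      have hBnpos : 0 < Bn := by
        rw [hBn]; simp [Fintype.card_fun]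
      refine ⟨Bn * ((j.choose 0 : ℝ) * C1 + (j.choose 1 : ℝ) * C2) + 1, by positivity, fun x => ?_⟩
      rw [Tmap_succ]
      have key := (outerB s).norm_iteratedFDeriv_le_of_bilinear
        (contDiff_id (E := EE)) (Tmap_contDiff s) x (n := j) (by exact_mod_cast le_top)
      set f : ℕ → ℝ := fun i => (j.choose i : ℝ) * ‖iteratedFDeriv ℝ i (fun y : EE => y) x‖ *
        ‖iteratedFDeriv ℝ (j - i) (Tmap s) x‖ with hf
      have hfz : ∀ i ∈ Finset.range (j + 1), i ∉ Finset.range (j + 1) ∩ {0, 1} → f i = 0 := by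
        intro i _ hi2
        have hige : ¬ (i = 0 ∨ i = 1) := by
          intro h
          apply hi2
          simp_all [Finset.mem_insert]
        push_neg at hige
        have : 2 ≤ i := by omega
        have hb := id_deriv_bound i x
        rw [if_neg (by omega), if_neg (by omega)] at hb
        have : ‖iteratedFDeriv ℝ i (fun y : EE => y) x‖ = 0 :=
          le_antisymm hb (norm_nonneg _)
        simp [hf, this]
      have hsum : ∑ i ∈ Finset.range (j + 1), f i = ∑ i ∈ Finset.range (j + 1) ∩ {0, 1}, f i :=
        (Finset.sum_subset (Finset.inter_subset_left) (by
          intro i hi hni; exact hfz i hi hni)).symm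
      have hsub : ∑ i ∈ Finset.range (j + 1) ∩ {0, 1}, f i ≤ f 0 + f 1 := by
        have h01 : ∑ i ∈ ({0, 1} : Finset ℕ), f i = f 0 + f 1 := by
          simp
        rw [← h01]
        apply Finset.sum_le_sum_of_subset_of_nonneg (Finset.inter_subset_right)
        intro i _ _
        have hb := id_deriv_bound i x
        positivity
      -- bound f 0 and f 1
      have hb0 : f 0 ≤ (j.choose 0 : ℝ) * C1 * Tb (s + 1) j x := by
        have h1 : ‖iteratedFDeriv ℝ 0 (fun y : EE => y) x‖ = ‖x‖ := by
          simp [norm_iteratedFDeriv_zero]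
        have h2 : ‖x‖ * Tb s j x ≤ Tb (s + 1) j x := by
          unfold Tb
          by_cases hj : j ≤ s
          · rw [if_pos hj, if_pos (by omega)]
            rw [← pow_succ']
            have : s + 1 - j = (s - j) + 1 := by omega
            rw [this]
          · rw [if_neg hj, mul_zero]
            split <;> positivity
        calc f 0 = (j.choose 0 : ℝ) * (‖x‖ * ‖iteratedFDeriv ℝ (j - 0) (Tmap s) x‖) := by
              rw [hf]; simp [h1]
        _ ≤ (j.choose 0 : ℝ) * (‖x‖ * (C1 * Tb s j x)) := by
              apply mul_le_mul_of_nonneg_left _ (by positivity)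
              apply mul_le_mul_of_nonneg_left _ (norm_nonneg x)
              simpa using hC1 x
        _ ≤ (j.choose 0 : ℝ) * C1 * Tb (s + 1) j x := by
              have := mul_le_mul_of_nonneg_left h2 (le_of_lt hC1p)
              calc (j.choose 0 : ℝ) * (‖x‖ * (C1 * Tb s j x))
                  = (j.choose 0 : ℝ) * (C1 * (‖x‖ * Tb s j x)) := by ring
                _ ≤ (j.choose 0 : ℝ) * (C1 * Tb (s + 1) j x) := by
                    apply mul_le_mul_of_nonneg_left _ (by positivity)
                    exact mul_le_mul_of_nonneg_left h2 (le_of_lt hC1p)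
                _ = (j.choose 0 : ℝ) * C1 * Tb (s + 1) j x := by ring
      have hb1 : f 1 ≤ (j.choose 1 : ℝ) * C2 * Tb (s + 1) j x := by
        by_cases hj0 : j = 0
        · -- then choose j 1 = 0
          subst hj0
          have : f 1 = 0 := by simp [hf]
          rw [this]
          simp
        · have h1 : ‖iteratedFDeriv ℝ 1 (fun y : EE => y) x‖ ≤ 1 := by
            have := id_deriv_bound 1 x; simpa using this
          have h2 : Tb s (j - 1) x = Tb (s + 1) j x := by
            unfold Tb
            by_cases hj : j ≤ s + 1
            · rw [if_pos (by omega), if_pos hj]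
              congr 1
              omega
            · rw [if_neg (by omega), if_neg hj]
          calc f 1 ≤ (j.choose 1 : ℝ) * 1 * ‖iteratedFDeriv ℝ (j - 1) (Tmap s) x‖ := by
                rw [hf]
                apply mul_le_mul_of_nonneg_right _ (norm_nonneg _)
                exact mul_le_mul_of_nonneg_left h1 (by positivity)
          _ ≤ (j.choose 1 : ℝ) * 1 * (C2 * Tb s (j - 1) x) := by
                apply mul_le_mul_of_nonneg_left (hC2 x) (by positivity)
          _ = (j.choose 1 : ℝ) * C2 * Tb (s + 1) j x := by rw [h2]; ring
      calc ‖iteratedFDeriv ℝ j (fun y => outerB s y (Tmap s y)) x‖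
          ≤ ‖outerB s‖ * ∑ i ∈ Finset.range (j + 1), f i := key
      _ ≤ Bn * ∑ i ∈ Finset.range (j + 1), f i := by
            apply mul_le_mul_of_nonneg_right (outerB_norm s)
            rw [hsum]
            apply Finset.sum_nonneg
            intro i _
            positivity
      _ ≤ Bn * ((j.choose 0 : ℝ) * C1 * Tb (s + 1) j x + (j.choose 1 : ℝ) * C2 * Tb (s + 1) j x)
          := by
            apply mul_le_mul_of_nonneg_left _ (le_of_lt hBnpos)
            rw [hsum]
            exact hsub.trans (add_le_add hb0 hb1)
      _ ≤ (Bn * ((j.choose 0 : ℝ) * C1 + (j.choose 1 : ℝ) * C2) + 1) * Tb (s + 1) j x := by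
            have h := Tb_nonneg (s + 1) j x
            nlinarith [hBnpos]


def qfun : EE → ℝ := fun x => (innerSL ℝ x) x

lemma qfun_eq (x : EE) : qfun x = ‖x‖ ^ 2 := real_inner_self_eq_norm_sq x

lemma qfun_contDiff : ContDiff ℝ (⊤ : ℕ∞) qfun :=
  (contDiff_id (E := EE)).inner ℝ (contDiff_id (E := EE))

lemma qfun_bound (j : ℕ) (x : EE) :
    ‖iteratedFDeriv ℝ j qfun x‖ ≤ 2 ^ j * (1 + ‖x‖) ^ 2 := by
  have key := (innerSL ℝ (E := EE)).norm_iteratedFDeriv_le_of_bilinear_of_le_one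
    (contDiff_id (E := EE)) (contDiff_id (E := EE)) x (n := j) (N := ((⊤ : ℕ∞) : WithTop ℕ∞))
    (by exact_mod_cast le_top) (norm_innerSL_le ℝ)
  refine key.trans ?_
  have hterm : ∀ i ∈ Finset.range (j + 1),
      (j.choose i : ℝ) * ‖iteratedFDeriv ℝ i (fun y : EE => y) x‖ *
        ‖iteratedFDeriv ℝ (j - i) (fun y : EE => y) x‖ ≤
      (j.choose i : ℝ) * ((1 + ‖x‖) * (1 + ‖x‖)) := by
    intro i _
    have hbd : ∀ k : ℕ, ‖iteratedFDeriv ℝ k (fun y : EE => y) x‖ ≤ 1 + ‖x‖ := by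
      intro k
      refine (id_deriv_bound k x).trans ?_
      split
      · linarith [norm_nonneg x]
      · split <;> [linarith [norm_nonneg x]; linarith [norm_nonneg x]]
    calc (j.choose i : ℝ) * ‖iteratedFDeriv ℝ i (fun y : EE => y) x‖ *
          ‖iteratedFDeriv ℝ (j - i) (fun y : EE => y) x‖
        ≤ (j.choose i : ℝ) * (1 + ‖x‖) * (1 + ‖x‖) := by
          apply mul_le_mul
          · exact mul_le_mul_of_nonneg_left (hbd i) (by positivity)
          · exact hbd _
          · exact norm_nonneg _
          · positivity
      _ = (j.choose i : ℝ) * ((1 + ‖x‖) * (1 + ‖x‖)) := by ring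
  refine (Finset.sum_le_sum hterm).trans ?_
  rw [← Finset.sum_mul]
  rw [← Nat.cast_sum, Nat.sum_range_choose]
  push_cast
  ring_nf
  nlinarith [norm_nonneg x]

def pfun : EE → ℝ := fun x => qfun x * qfun x

lemma pfun_eq (x : EE) : pfun x = ‖x‖ ^ 4 := by
  unfold pfun
  rw [qfun_eq]
  ring

lemma pfun_contDiff : ContDiff ℝ (⊤ : ℕ∞) pfun := qfun_contDiff.mul qfun_contDiff

lemma pfun_bound (j : ℕ) (x : EE) :
    ‖iteratedFDeriv ℝ j pfun x‖ ≤ 8 ^ j * (1 + ‖x‖) ^ 4 := by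
  have key := (ContinuousLinearMap.mul ℝ ℝ).norm_iteratedFDeriv_le_of_bilinear_of_le_one
    qfun_contDiff qfun_contDiff x (n := j) (N := ((⊤ : ℕ∞) : WithTop ℕ∞))
    (by exact_mod_cast le_top) (ContinuousLinearMap.opNorm_mul_le ℝ ℝ)
  have heq : (fun y => (ContinuousLinearMap.mul ℝ ℝ) (qfun y) (qfun y)) = pfun := rfl
  rw [heq] at key
  refine key.trans ?_
  have hterm : ∀ i ∈ Finset.range (j + 1),
      (j.choose i : ℝ) * ‖iteratedFDeriv ℝ i qfun x‖ * ‖iteratedFDeriv ℝ (j - i) qfun x‖ ≤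
      (j.choose i : ℝ) * (2 ^ j * (2 ^ j * (1 + ‖x‖) ^ 4)) := by
    intro i hi
    have hi' : i ≤ j := by simp at hi; omega
    have h1 := qfun_bound i x
    have h2 := qfun_bound (j - i) x
    have e1 : (2:ℝ) ^ i ≤ 2 ^ j := by
      apply pow_le_pow_right₀ (by norm_num) hi'
    have e2 : (2:ℝ) ^ (j - i) ≤ 2 ^ j := by
      apply pow_le_pow_right₀ (by norm_num) (by omega)
    have hx : (0:ℝ) ≤ 1 + ‖x‖ := by linarith [norm_nonneg x]
    calc (j.choose i : ℝ) * ‖iteratedFDeriv ℝ i qfun x‖ * ‖iteratedFDeriv ℝ (j - i) qfun x‖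
        ≤ (j.choose i : ℝ) * (2 ^ i * (1 + ‖x‖) ^ 2) * (2 ^ (j - i) * (1 + ‖x‖) ^ 2) := by
          apply mul_le_mul
          · exact mul_le_mul_of_nonneg_left h1 (by positivity)
          · exact h2
          · exact norm_nonneg _
          · positivity
      _ ≤ (j.choose i : ℝ) * (2 ^ j * (1 + ‖x‖) ^ 2) * (2 ^ j * (1 + ‖x‖) ^ 2) := by
          apply mul_le_mul
          · apply mul_le_mul_of_nonneg_left _ (by positivity)
            exact mul_le_mul_of_nonneg_right e1 (by positivity)
          · exact mul_le_mul_of_nonneg_right e2 (by positivity)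
          · positivity
          · positivity
      _ = (j.choose i : ℝ) * (2 ^ j * (2 ^ j * (1 + ‖x‖) ^ 4)) := by ring
  refine (Finset.sum_le_sum hterm).trans ?_
  rw [← Finset.sum_mul, ← Nat.cast_sum, Nat.sum_range_choose]
  apply le_of_eq
  push_cast
  rw [show (8:ℝ) = 2 * (2 * 2) by norm_num, mul_pow, mul_pow]
  ring


lemma exp_poly_bound (k : ℕ) (t : ℝ) (ht : 0 ≤ t) :
    (1 + t) ^ k * Real.exp (-(t ^ 4)) ≤ 2 ^ k * (1 + k.factorial) := by
  have hX : (0:ℝ) < Real.exp (-(t ^ 4)) := Real.exp_pos _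
  have hfac : (1:ℝ) ≤ k.factorial := by exact_mod_cast Nat.one_le_iff_ne_zero.mpr k.factorial_ne_zero
  rcases le_or_gt t 1 with h1 | h1
  · have hb : (1 + t) ^ k ≤ 2 ^ k := pow_le_pow_left₀ (by linarith) (by linarith) k
    have he : Real.exp (-(t ^ 4)) ≤ 1 := Real.exp_le_one_iff.mpr (neg_nonpos.mpr (by positivity))
    calc (1 + t) ^ k * Real.exp (-(t ^ 4)) ≤ 2 ^ k * 1 :=
          mul_le_mul hb he (le_of_lt hX) (by positivity)
      _ ≤ 2 ^ k * (1 + k.factorial) := by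
          apply mul_le_mul_of_nonneg_left _ (by positivity)
          linarith
  · have ht1 : (1:ℝ) ≤ t := le_of_lt h1
    have hA : t ^ (4 * k) ≤ (k.factorial : ℝ) * Real.exp (t ^ 4) := by
      have hsum := Real.sum_le_exp_of_nonneg (x := t ^ 4) (by positivity) (k + 1)
      have hterm := Finset.single_le_sum
        (f := fun i => (t ^ 4) ^ i / (i.factorial : ℝ))
        (fun i _ => by positivity) (Finset.mem_range.mpr (Nat.lt_succ_self k))
      have : (t ^ 4) ^ k / (k.factorial : ℝ) ≤ Real.exp (t ^ 4) := le_trans hterm hsum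
      rw [← pow_mul] at this
      rw [div_le_iff₀ (by positivity)] at this
      calc t ^ (4 * k) ≤ Real.exp (t ^ 4) * (k.factorial : ℝ) := this
        _ = (k.factorial : ℝ) * Real.exp (t ^ 4) := by ring
    calc (1 + t) ^ k * Real.exp (-(t ^ 4))
        ≤ (2 * t) ^ k * Real.exp (-(t ^ 4)) := by
          apply mul_le_mul_of_nonneg_right _ (le_of_lt hX)
          exact pow_le_pow_left₀ (by linarith) (by linarith) k
      _ = 2 ^ k * (t ^ k * Real.exp (-(t ^ 4))) := by rw [mul_pow]; ring
      _ ≤ 2 ^ k * (t ^ (4 * k) * Real.exp (-(t ^ 4))) := by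
          apply mul_le_mul_of_nonneg_left _ (by positivity)
          apply mul_le_mul_of_nonneg_right _ (le_of_lt hX)
          exact pow_le_pow_right₀ ht1 (by omega)
      _ ≤ 2 ^ k * ((k.factorial : ℝ) * Real.exp (t ^ 4) * Real.exp (-(t ^ 4))) := by
          apply mul_le_mul_of_nonneg_left _ (by positivity)
          exact mul_le_mul_of_nonneg_right hA (le_of_lt hX)
      _ = 2 ^ k * (k.factorial : ℝ) := by
          rw [mul_assoc, ← Real.exp_add]
          simp
      _ ≤ 2 ^ k * (1 + k.factorial) := by
          apply mul_le_mul_of_nonneg_left _ (by positivity)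
          linarith

def hfun : EE → ℝ := fun x => Real.exp (-pfun x)

lemma hfun_contDiff : ContDiff ℝ (⊤ : ℕ∞) hfun := pfun_contDiff.neg.exp

def Fp : EE → (EE →L[ℝ] ℝ) := fderiv ℝ pfun

lemma Fp_contDiff : ContDiff ℝ (⊤ : ℕ∞) Fp := by
  apply pfun_contDiff.fderiv_right
  simp

lemma Fp_bound (j : ℕ) (x : EE) : ‖iteratedFDeriv ℝ j Fp x‖ ≤ 8 ^ (j + 1) * (1 + ‖x‖) ^ 4 := by
  have : ‖iteratedFDeriv ℝ j Fp x‖ = ‖iteratedFDeriv ℝ (j + 1) pfun x‖ :=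
    norm_iteratedFDeriv_fderiv
  rw [this]
  exact pfun_bound (j + 1) x

lemma fderiv_hfun : fderiv ℝ hfun = fun x => (-hfun x) • Fp x := by
  funext x
  have hp : HasFDerivAt pfun (Fp x) x :=
    ((pfun_contDiff.differentiable (by simp)) x).hasFDerivAt
  have hd := hp.neg.exp
  have heq : fderiv ℝ hfun x = Real.exp (-pfun x) • (-Fp x) := hd.fderiv
  rw [heq, smul_neg, ← neg_smul]
  rfl

lemma hfun_decay : ∀ n k : ℕ, ∃ C : ℝ, 0 < C ∧
    ∀ i ≤ n, ∀ x : EE, (1 + ‖x‖) ^ k * ‖iteratedFDeriv ℝ i hfun x‖ ≤ C := by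
  intro n
  induction n with
  | zero =>
      intro k
      refine ⟨2 ^ k * (1 + k.factorial), by positivity, ?_⟩
      intro i hi x
      obtain rfl : i = 0 := Nat.le_zero.mp hi
      rw [norm_iteratedFDeriv_zero]
      have hval : ‖hfun x‖ = Real.exp (-(‖x‖ ^ 4)) := by
        show ‖Real.exp (-pfun x)‖ = _
        rw [pfun_eq, Real.norm_eq_abs, abs_of_pos (Real.exp_pos _)]
      rw [hval]
      exact exp_poly_bound k ‖x‖ (norm_nonneg x)
  | succ n ih =>
      intro k
      obtain ⟨C0, hC0p, hC0⟩ := ih k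
      obtain ⟨C1, hC1p, hC1⟩ := ih (k + 4)
      refine ⟨max C0 (2 ^ n * (C1 * 8 ^ (n + 1))), lt_max_of_lt_left hC0p, ?_⟩
      intro i hi x
      by_cases hin : i ≤ n
      · exact (hC0 i hin x).trans (le_max_left _ _)
      · obtain rfl : i = n + 1 := by omega
        refine le_trans ?_ (le_max_right _ _)
        have hstep : ‖iteratedFDeriv ℝ (n + 1) hfun x‖
            = ‖iteratedFDeriv ℝ n (fderiv ℝ hfun) x‖ := norm_iteratedFDeriv_fderiv.symm
        rw [hstep, fderiv_hfun]
        have key := norm_iteratedFDeriv_smul_le (𝕜 := ℝ)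
          (f := fun y : EE => -hfun y) (g := Fp) (hfun_contDiff.neg) Fp_contDiff x
          (n := n) (N := ((⊤ : ℕ∞) : WithTop ℕ∞)) (by exact_mod_cast le_top)
        have hterm : ∀ m ∈ Finset.range (n + 1),
            (1 + ‖x‖) ^ k * ((n.choose m : ℝ) * ‖iteratedFDeriv ℝ m (fun y : EE => -hfun y) x‖ *
              ‖iteratedFDeriv ℝ (n - m) Fp x‖) ≤ (n.choose m : ℝ) * (C1 * 8 ^ (n + 1)) := by
          intro m hm
          have hm' : m ≤ n := by simp at hm; omega
          have hneg : ‖iteratedFDeriv ℝ m (fun y : EE => -hfun y) x‖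
              = ‖iteratedFDeriv ℝ m hfun x‖ := by
            have heq : (fun y : EE => -hfun y) = -hfun := rfl
            rw [heq, iteratedFDeriv_neg_apply, norm_neg]
          have h1 : (1 + ‖x‖) ^ (k + 4) * ‖iteratedFDeriv ℝ m hfun x‖ ≤ C1 := hC1 m hm' x
          have h2 : ‖iteratedFDeriv ℝ (n - m) Fp x‖ ≤ 8 ^ (n + 1) * (1 + ‖x‖) ^ 4 := by
            refine (Fp_bound (n - m) x).trans ?_
            apply mul_le_mul_of_nonneg_right _ (by positivity)
            apply pow_le_pow_right₀ (by norm_num) (by omega)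
          rw [hneg]
          set a := ‖iteratedFDeriv ℝ m hfun x‖
          set b := ‖iteratedFDeriv ℝ (n - m) Fp x‖
          have ha : 0 ≤ a := norm_nonneg _
          have hx0 : (0:ℝ) ≤ 1 + ‖x‖ := by linarith [norm_nonneg x]
          calc (1 + ‖x‖) ^ k * ((n.choose m : ℝ) * a * b)
              = (n.choose m : ℝ) * (((1 + ‖x‖) ^ k * a) * b) := by ring
            _ ≤ (n.choose m : ℝ) * (((1 + ‖x‖) ^ k * a) * (8 ^ (n + 1) * (1 + ‖x‖) ^ 4)) := by
                apply mul_le_mul_of_nonneg_left _ (by positivity)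
                exact mul_le_mul_of_nonneg_left h2 (by positivity)
            _ = (n.choose m : ℝ) * (((1 + ‖x‖) ^ (k + 4) * a) * 8 ^ (n + 1)) := by
                rw [pow_add]; ring
            _ ≤ (n.choose m : ℝ) * (C1 * 8 ^ (n + 1)) := by
                apply mul_le_mul_of_nonneg_left _ (by positivity)
                exact mul_le_mul_of_nonneg_right h1 (by positivity)
        calc (1 + ‖x‖) ^ k * ‖iteratedFDeriv ℝ n (fun y : EE => (-hfun y) • Fp y) x‖
            ≤ (1 + ‖x‖) ^ k * ∑ m ∈ Finset.range (n + 1),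
              (n.choose m : ℝ) * ‖iteratedFDeriv ℝ m (fun y : EE => -hfun y) x‖ *
                ‖iteratedFDeriv ℝ (n - m) Fp x‖ := by
              apply mul_le_mul_of_nonneg_left key (by positivity)
          _ = ∑ m ∈ Finset.range (n + 1), (1 + ‖x‖) ^ k *
              ((n.choose m : ℝ) * ‖iteratedFDeriv ℝ m (fun y : EE => -hfun y) x‖ *
                ‖iteratedFDeriv ℝ (n - m) Fp x‖) := Finset.mul_sum _ _ _
          _ ≤ ∑ m ∈ Finset.range (n + 1), (n.choose m : ℝ) * (C1 * 8 ^ (n + 1)) :=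
              Finset.sum_le_sum hterm
          _ = 2 ^ n * (C1 * 8 ^ (n + 1)) := by
              rw [← Finset.sum_mul, ← Nat.cast_sum, Nat.sum_range_choose]
              norm_num


def gfun : EE → ℝ := fun x => 1 - hfun x

lemma gfun_contDiff : ContDiff ℝ (⊤ : ℕ∞) gfun := contDiff_const.sub hfun_contDiff

lemma gfun_bound0 (x : EE) : ‖iteratedFDeriv ℝ 0 gfun x‖ ≤ min 1 (‖x‖ ^ 4) := by
  rw [norm_iteratedFDeriv_zero]
  have hval : gfun x = 1 - Real.exp (-(‖x‖ ^ 4)) := by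
    show 1 - Real.exp (-pfun x) = _
    rw [pfun_eq]
  rw [hval, Real.norm_eq_abs]
  have h1 : Real.exp (-(‖x‖ ^ 4)) ≤ 1 := Real.exp_le_one_iff.mpr (neg_nonpos.mpr (by positivity))
  have h2 : -(‖x‖ ^ 4) + 1 ≤ Real.exp (-(‖x‖ ^ 4)) := Real.add_one_le_exp _
  have h3 := Real.exp_pos (-(‖x‖ ^ 4))
  rw [abs_of_nonneg (by linarith)]
  apply le_min (by linarith) (by linarith)

lemma gfun_deriv_eq {i : ℕ} (hi : i ≠ 0) (x : EE) :
    ‖iteratedFDeriv ℝ i gfun x‖ = ‖iteratedFDeriv ℝ i hfun x‖ := by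
  have heq : gfun = (fun _ : EE => (1:ℝ)) + (fun y => -hfun y) := by
    funext y
    show 1 - hfun y = 1 + (-(hfun y))
    ring
  rw [heq, iteratedFDeriv_add_apply contDiff_const.contDiffAt
    ((hfun_contDiff.neg).of_le (by exact_mod_cast le_top)).contDiffAt,
    iteratedFDeriv_const_of_ne hi]
  have h2 : (fun y : EE => -hfun y) = -hfun := rfl
  rw [h2, iteratedFDeriv_neg_apply]
  simp

lemma exists_uniform (P : ℕ → ℝ → Prop) (hmono : ∀ j C C', C ≤ C' → P j C → P j C')
    (h : ∀ j, ∃ C, 0 < C ∧ P j C) : ∀ N, ∃ C, 0 < C ∧ ∀ j ≤ N, P j C := by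
  intro N
  induction N with
  | zero =>
      obtain ⟨C, h1, h2⟩ := h 0
      exact ⟨C, h1, fun j hj => by obtain rfl := Nat.le_zero.mp hj; exact h2⟩
  | succ N ih =>
      obtain ⟨C, h1, h2⟩ := ih
      obtain ⟨C', h1', h2'⟩ := h (N + 1)
      refine ⟨max C C', lt_max_of_lt_left h1, fun j hj => ?_⟩
      by_cases hjN : j ≤ N
      · exact hmono j C _ (le_max_left _ _) (h2 j hjN)
      · obtain rfl : j = N + 1 := by omega
        exact hmono _ C' _ (le_max_right _ _) h2'

end StmtAux

theorem stmt_16 (s wmax : ℕ) (hwmax : 4 ≤ wmax) :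
    ∃ c : ℝ, 0 < c ∧ ∀ u : ℕ, u ≤ wmax → ∀ x : EuclideanSpace ℝ (Fin 4),
      ‖iteratedFDeriv ℝ u
          (fun x : EuclideanSpace ℝ (Fin 4) =>
            (show EuclideanSpace ℝ (Fin s → Fin 4) from
              WithLp.toLp 2 (fun μ : Fin s → Fin 4 => (∏ i, x (μ i)) * (1 - Real.exp (-‖x‖ ^ 4))))) x‖ ≤
        c * (if u ≤ s then ‖x‖ ^ (s + 1 - u) else 1) := by
  classical
  set K := s + wmax with hK
  obtain ⟨CT, hCTp, hCT⟩ := exists_uniform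
    (fun j C => ∀ x, ‖iteratedFDeriv ℝ j (Tmap s) x‖ ≤ C * Tb s j x)
    (fun j C C' hle hP x => (hP x).trans (mul_le_mul_of_nonneg_right hle (Tb_nonneg s j x)))
    (Tmap_bound s) wmax
  obtain ⟨Cg, hCgp, hCg⟩ := hfun_decay wmax K
  refine ⟨(wmax + 1) * 2 ^ wmax * ((Cg + 1) * (CT + 1)), by positivity, ?_⟩
  intro u hu x
  have hfeq : (fun x : EuclideanSpace ℝ (Fin 4) =>
      (show EuclideanSpace ℝ (Fin s → Fin 4) from
        WithLp.toLp 2 (fun μ : Fin s → Fin 4 => (∏ i, x (μ i)) * (1 - Real.exp (-‖x‖ ^ 4)))))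
      = fun y => gfun y • Tmap s y := by
    funext y
    ext μ
    show (∏ i, y (μ i)) * (1 - Real.exp (-‖y‖ ^ 4)) = (gfun y • Tmap s y) μ
    have h1 : (gfun y • Tmap s y) μ = gfun y * ((Tmap s y) μ) := rfl
    have h2 : gfun y = 1 - Real.exp (-(‖y‖ ^ 4)) := by
      show 1 - Real.exp (-pfun y) = _
      rw [pfun_eq]
    have h3 : (Tmap s y) μ = ∏ i, y (μ i) := rfl
    rw [h1, h2, h3]
    ring
  rw [hfeq]
  set R := (if u ≤ s then ‖x‖ ^ (s + 1 - u) else (1:ℝ)) with hR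
  have hR0 : 0 ≤ R := by rw [hR]; split <;> positivity
  have hA1 : (1:ℝ) ≤ 1 + ‖x‖ := by linarith [norm_nonneg x]
  have hxA : ‖x‖ ≤ 1 + ‖x‖ := by linarith
  have key := norm_iteratedFDeriv_smul_le (𝕜 := ℝ) (f := gfun) (g := Tmap s)
    gfun_contDiff (Tmap_contDiff s) x (n := u) (N := ((⊤ : ℕ∞) : WithTop ℕ∞))
    (by exact_mod_cast le_top)
  have hterm : ∀ m ∈ Finset.range (u + 1),
      (u.choose m : ℝ) * ‖iteratedFDeriv ℝ m gfun x‖ *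
        ‖iteratedFDeriv ℝ (u - m) (Tmap s) x‖ ≤ 2 ^ wmax * ((Cg + 1) * ((CT + 1) * R)) := by
    intro m hm
    have hmu : m ≤ u := by simp at hm; omega
    have hch : (u.choose m : ℝ) ≤ 2 ^ wmax := by
      have h1 : u.choose m ≤ 2 ^ u := by
        calc u.choose m ≤ ∑ i ∈ Finset.range (u + 1), u.choose i :=
              Finset.single_le_sum (fun i _ => Nat.zero_le _) hm
          _ = 2 ^ u := Nat.sum_range_choose u
      calc (u.choose m : ℝ) ≤ (2:ℝ) ^ u := by exact_mod_cast h1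
        _ ≤ 2 ^ wmax := pow_le_pow_right₀ (by norm_num) hu
    have hTm := hCT (u - m) (by omega) x
    by_cases hm0 : m = 0
    · subst hm0
      have hg0 := gfun_bound0 x
      have hmin : min 1 (‖x‖ ^ 4) * Tb s u x ≤ R := by
        by_cases hus : u ≤ s
        · have hTbv : Tb s u x = ‖x‖ ^ (s - u) := by unfold Tb; rw [if_pos hus]
          have hRv : R = ‖x‖ ^ (s - u + 1) := by
            rw [hR, if_pos hus]
            congr 1
            omega
          rw [hTbv, hRv]
          rcases le_or_gt ‖x‖ 1 with hx1 | hx1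
          · have : min 1 (‖x‖ ^ 4) ≤ ‖x‖ := by
              refine (min_le_right _ _).trans ?_
              calc ‖x‖ ^ 4 ≤ ‖x‖ ^ 1 := pow_le_pow_of_le_one (norm_nonneg x) hx1 (by norm_num)
                _ = ‖x‖ := pow_one _
            calc min 1 (‖x‖ ^ 4) * ‖x‖ ^ (s - u) ≤ ‖x‖ * ‖x‖ ^ (s - u) :=
                  mul_le_mul_of_nonneg_right this (by positivity)
              _ = ‖x‖ ^ (s - u + 1) := (pow_succ' _ _).symm
          · calc min 1 (‖x‖ ^ 4) * ‖x‖ ^ (s - u) ≤ 1 * ‖x‖ ^ (s - u) :=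
                  mul_le_mul_of_nonneg_right (min_le_left _ _) (by positivity)
              _ = ‖x‖ ^ (s - u) := one_mul _
              _ ≤ ‖x‖ ^ (s - u + 1) := pow_le_pow_right₀ (le_of_lt hx1) (by omega)
        · have hTbv : Tb s u x = 0 := by unfold Tb; rw [if_neg hus]
          rw [hTbv, mul_zero]
          exact hR0
      have hminn : (0:ℝ) ≤ min 1 (‖x‖ ^ 4) := le_min (by norm_num) (by positivity)
      calc (u.choose 0 : ℝ) * ‖iteratedFDeriv ℝ 0 gfun x‖ *
            ‖iteratedFDeriv ℝ (u - 0) (Tmap s) x‖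
          = ‖iteratedFDeriv ℝ 0 gfun x‖ * ‖iteratedFDeriv ℝ (u - 0) (Tmap s) x‖ := by
            simp
        _ ≤ min 1 (‖x‖ ^ 4) * (CT * Tb s u x) := by
            apply mul_le_mul hg0 _ (norm_nonneg _) hminn
            simpa using hCT u hu x
        _ = CT * (min 1 (‖x‖ ^ 4) * Tb s u x) := by ring
        _ ≤ CT * R := mul_le_mul_of_nonneg_left hmin (le_of_lt hCTp)
        _ ≤ (CT + 1) * R := mul_le_mul_of_nonneg_right (by linarith) hR0
        _ ≤ (Cg + 1) * ((CT + 1) * R) := le_mul_of_one_le_left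
            (mul_nonneg (by linarith) hR0) (by linarith)
        _ ≤ 2 ^ wmax * ((Cg + 1) * ((CT + 1) * R)) := le_mul_of_one_le_left
            (mul_nonneg (by linarith) (mul_nonneg (by linarith) hR0))
            (one_le_pow₀ (by norm_num))
    · have hg := gfun_deriv_eq hm0 x
      have h1 : (1 + ‖x‖) ^ K * ‖iteratedFDeriv ℝ m hfun x‖ ≤ Cg := hCg m (le_trans hmu hu) x
      have hTb : Tb s (u - m) x ≤ (1 + ‖x‖) ^ K * R := by
        by_cases hus : u ≤ s
        · have hums : u - m ≤ s := by omega
          have hTbv : Tb s (u - m) x = ‖x‖ ^ (s - (u - m)) := by unfold Tb; rw [if_pos hums]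
          have hRv : R = ‖x‖ ^ (s + 1 - u) := by rw [hR, if_pos hus]
          have hexp : s - (u - m) = (s + 1 - u) + (m - 1) := by omega
          rw [hTbv, hRv, hexp, pow_add]
          have hb1 : ‖x‖ ^ (m - 1) ≤ (1 + ‖x‖) ^ K := by
            calc ‖x‖ ^ (m - 1) ≤ (1 + ‖x‖) ^ (m - 1) :=
                  pow_le_pow_left₀ (norm_nonneg x) hxA _
              _ ≤ (1 + ‖x‖) ^ K := pow_le_pow_right₀ hA1 (by omega)
          calc ‖x‖ ^ (s + 1 - u) * ‖x‖ ^ (m - 1)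
              ≤ ‖x‖ ^ (s + 1 - u) * (1 + ‖x‖) ^ K :=
                mul_le_mul_of_nonneg_left hb1 (by positivity)
            _ = (1 + ‖x‖) ^ K * ‖x‖ ^ (s + 1 - u) := by ring
        · have hRv : R = 1 := by rw [hR, if_neg hus]
          rw [hRv, mul_one]
          by_cases hums : u - m ≤ s
          · have hTbv : Tb s (u - m) x = ‖x‖ ^ (s - (u - m)) := by unfold Tb; rw [if_pos hums]
            rw [hTbv]
            calc ‖x‖ ^ (s - (u - m)) ≤ (1 + ‖x‖) ^ (s - (u - m)) :=
                  pow_le_pow_left₀ (norm_nonneg x) hxA _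
              _ ≤ (1 + ‖x‖) ^ K := pow_le_pow_right₀ hA1 (by omega)
          · have hTbv : Tb s (u - m) x = 0 := by unfold Tb; rw [if_neg hums]
            rw [hTbv]
            positivity
      calc (u.choose m : ℝ) * ‖iteratedFDeriv ℝ m gfun x‖ *
            ‖iteratedFDeriv ℝ (u - m) (Tmap s) x‖
          ≤ (u.choose m : ℝ) * ‖iteratedFDeriv ℝ m hfun x‖ * (CT * Tb s (u - m) x) := by
            rw [hg]
            exact mul_le_mul_of_nonneg_left hTm (by positivity)
        _ ≤ (u.choose m : ℝ) * ‖iteratedFDeriv ℝ m hfun x‖ * (CT * ((1 + ‖x‖) ^ K * R)) := by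
            apply mul_le_mul_of_nonneg_left _ (by positivity)
            exact mul_le_mul_of_nonneg_left hTb (le_of_lt hCTp)
        _ = (u.choose m : ℝ) * (CT * (((1 + ‖x‖) ^ K * ‖iteratedFDeriv ℝ m hfun x‖) * R)) := by
            ring
        _ ≤ (u.choose m : ℝ) * (CT * (Cg * R)) := by
            apply mul_le_mul_of_nonneg_left _ (by positivity)
            apply mul_le_mul_of_nonneg_left _ (le_of_lt hCTp)
            exact mul_le_mul_of_nonneg_right h1 hR0
        _ ≤ 2 ^ wmax * (CT * (Cg * R)) := mul_le_mul_of_nonneg_right hch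
            (mul_nonneg (le_of_lt hCTp) (mul_nonneg (le_of_lt hCgp) hR0))
        _ = 2 ^ wmax * (Cg * (CT * R)) := by ring
        _ ≤ 2 ^ wmax * ((Cg + 1) * ((CT + 1) * R)) := by
            apply mul_le_mul_of_nonneg_left _ (by positivity)
            apply mul_le_mul (by linarith)
              (mul_le_mul_of_nonneg_right (by linarith) hR0)
              (mul_nonneg (le_of_lt hCTp) hR0) (by linarith)
  calc ‖iteratedFDeriv ℝ u (fun y => gfun y • Tmap s y) x‖
      ≤ ∑ m ∈ Finset.range (u + 1), (u.choose m : ℝ) * ‖iteratedFDeriv ℝ m gfun x‖ *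
        ‖iteratedFDeriv ℝ (u - m) (Tmap s) x‖ := key
    _ ≤ ∑ _m ∈ Finset.range (u + 1), 2 ^ wmax * ((Cg + 1) * ((CT + 1) * R)) :=
        Finset.sum_le_sum hterm
    _ = (u + 1 : ℝ) * (2 ^ wmax * ((Cg + 1) * ((CT + 1) * R))) := by
        rw [Finset.sum_const, Finset.card_range]
        push_cast
        ring
    _ ≤ (wmax + 1 : ℝ) * (2 ^ wmax * ((Cg + 1) * ((CT + 1) * R))) := by
        apply mul_le_mul_of_nonneg_right _ (by positivity)
        have : (u:ℝ) ≤ (wmax:ℝ) := by exact_mod_cast hu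
        linarith
    _ = (wmax + 1) * 2 ^ wmax * ((Cg + 1) * (CT + 1)) * R := by ring
end

section
/- Let f : [0,∞) → ℝ be differentiable (as a function of p²) and consider F(p) := f(p²) on ℝ⁴. Then for every w ∈ ℕ and every choice of indices μ₁,...,μ_w, the w-th partial derivative satisfies |∂_{p_{μ₁}}···∂_{p_{μ_w}} f(p²)| ≤ 2^w Σ_{k=0}^{⌊w/2⌋} (w!/((w−2k)! k!)) |p|^{w−2k} |f^{(w−k)}(p²)|, where f^{(j)} denotes the j-th derivative of f with respect to its argument. -/
open scoped BigOperators
noncomputable section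
namespace S17

abbrev E4 := EuclideanSpace ℝ (Fin 4)

def sing (μ : Fin 4) : E4 := EuclideanSpace.single μ (1:ℝ)

structure Tm where
  r : ℕ
  c : ℝ
  L : List (Fin 4)

def val (f : ℝ → ℝ) (t : Tm) (x : E4) : ℝ :=
  t.c * (t.L.map (fun ν => x ν)).prod * iteratedDeriv t.r f (‖x‖^2)

def dels (ν : Fin 4) : List (Fin 4) → List (List (Fin 4))
  | [] => []
  | a :: L => (if a = ν then [L] else []) ++ (dels ν L).map (a :: ·)

def step (ν : Fin 4) (t : Tm) : List Tm :=
  ⟨t.r + 1, 2 * t.c, ν :: t.L⟩ :: (dels ν t.L).map (fun M => ⟨t.r, t.c, M⟩)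

def iterT : (n : ℕ) → (Fin n → Fin 4) → List Tm → List Tm
  | 0, _, T => T
  | n+1, ν, T => iterT n (fun i => ν i.castSucc) (T.flatMap (step (ν (Fin.last n))))

def totalVal (f : ℝ → ℝ) (T : List Tm) (x : E4) : ℝ := (T.map (fun t => val f t x)).sum

-- basic facts
lemma abs_coord_le (x : E4) (i : Fin 4) : |x i| ≤ ‖x‖ := by
  have h := abs_real_inner_le_norm (EuclideanSpace.single i (1:ℝ)) x
  rw [EuclideanSpace.inner_single_left] at h
  simpa [EuclideanSpace.norm_single] using h

lemma contDiff_iteratedDeriv {w m r : ℕ} {f : ℝ → ℝ} (hf : ContDiff ℝ (w : ℕ∞) f)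
    (h : r + m ≤ w) : ContDiff ℝ (m : ℕ) (iteratedDeriv r f) := by
  rw [iteratedDeriv_eq_iterate]
  refine ContDiff.iterate_deriv' m r (hf.of_le ?_)
  have : ((m + r : ℕ) : ℕ∞) ≤ (w : ℕ∞) := by exact_mod_cast (by omega : m + r ≤ w)
  exact_mod_cast this


lemma contDiff_coordProd (L : List (Fin 4)) {n : ℕ∞} :
    ContDiff ℝ n (fun y : E4 => (L.map (fun ν => y ν)).prod) := by
  induction L with
  | nil => simpa using contDiff_const
  | cons a L ih =>
      simp only [List.map_cons, List.prod_cons]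
      exact ((EuclideanSpace.proj a).contDiff).mul ih

lemma hasFDerivAt_norm_sq (x : E4) :
    HasFDerivAt (fun y : E4 => ‖y‖^2) ((2:ℕ) • (innerSL ℝ x)) x :=
  (hasStrictFDerivAt_norm_sq x).hasFDerivAt

lemma norm_sq_deriv_apply (x : E4) (μ : Fin 4) :
    ((2:ℕ) • (innerSL ℝ x)) (sing μ) = 2 * x μ := by
  simp [sing, EuclideanSpace.inner_single_right, real_inner_comm]

lemma prod_hasFDerivAt (L : List (Fin 4)) (x : E4) :
    ∃ D : E4 →L[ℝ] ℝ, HasFDerivAt (fun y : E4 => (L.map (fun ν => y ν)).prod) D x ∧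
      ∀ μ, D (sing μ) =
        ((dels μ L).map (fun M => (M.map (fun ν => x ν)).prod)).sum := by
  induction L with
  | nil =>
      exact ⟨0, by simpa using hasFDerivAt_const (1:ℝ) x, by simp [dels]⟩
  | cons a L ih =>
      obtain ⟨D, hD, hDapp⟩ := ih
      have ha : HasFDerivAt (fun y : E4 => y a) (EuclideanSpace.proj a : E4 →L[ℝ] ℝ) x := by
        exact (EuclideanSpace.proj (𝕜 := ℝ) (ι := Fin 4) a).hasFDerivAt
      refine ⟨_, (by have h := ha.mul hD; simp only [List.map_cons, List.prod_cons]; exact h :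
        HasFDerivAt (fun y : E4 => (((a :: L).map (fun ν => y ν)).prod))
          (x a • D + ((L.map (fun ν => x ν)).prod) • (EuclideanSpace.proj a : E4 →L[ℝ] ℝ)) x), ?_⟩
      intro μ
      have hsing : (EuclideanSpace.proj a : E4 →L[ℝ] ℝ) (sing μ) = if a = μ then 1 else 0 := by
        simp [sing, EuclideanSpace.single_apply, eq_comm]
      rw [ContinuousLinearMap.add_apply, ContinuousLinearMap.smul_apply,
        ContinuousLinearMap.smul_apply, hDapp μ, hsing]
      simp only [dels, List.map_append, List.sum_append, List.map_map]
      rcases eq_or_ne a μ with h | h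
      · subst h
        simp [Function.comp_def, List.prod_cons, ← List.sum_map_mul_left, smul_eq_mul, add_comm]
      · simp [h, Function.comp_def, List.prod_cons, ← List.sum_map_mul_left, smul_eq_mul]


lemma list_sum_mul_left {α : Type*} (l : List α) (c : ℝ) (F : α → ℝ) :
    (l.map (fun a => c * F a)).sum = c * (l.map F).sum := by
  induction l with
  | nil => simp
  | cons a l ih => simp [ih, mul_add]

lemma list_sum_flat {α β : Type*} (l : List α) (g : α → List β) (F : β → ℝ) :
    ((l.flatMap g).map F).sum = (l.map (fun a => ((g a).map F).sum)).sum := by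
  induction l with
  | nil => simp
  | cons a l ih => simp [List.flatMap_cons, ih]

lemma val_contDiff {w : ℕ} {f : ℝ → ℝ} (hf : ContDiff ℝ (w : ℕ∞) f) (t : Tm) (n : ℕ)
    (h : t.r + n ≤ w) : ContDiff ℝ (n : ℕ) (val f t) := by
  unfold val
  exact (contDiff_const.mul (contDiff_coordProd t.L)).mul
    ((contDiff_iteratedDeriv hf h).comp (contDiff_norm_sq ℝ))

lemma val_hasFDerivAt {f : ℝ → ℝ} (t : Tm)
    (hd : Differentiable ℝ (iteratedDeriv t.r f)) (x : E4) :
    ∃ D : E4 →L[ℝ] ℝ, HasFDerivAt (val f t) D x ∧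
      ∀ ν, D (sing ν) = ((step ν t).map (fun s => val f s x)).sum := by
  obtain ⟨Dp, hp, hpapp⟩ := prod_hasFDerivAt t.L x
  have hg : HasDerivAt (iteratedDeriv t.r f) (iteratedDeriv (t.r + 1) f (‖x‖^2)) (‖x‖^2) := by
    rw [iteratedDeriv_succ]
    exact (hd (‖x‖^2)).hasDerivAt
  have hgq : HasFDerivAt (fun y : E4 => iteratedDeriv t.r f (‖y‖^2))
      (iteratedDeriv (t.r + 1) f (‖x‖^2) • ((2:ℕ) • (innerSL ℝ x))) x :=
    by have := hg.comp_hasFDerivAt x (hasFDerivAt_norm_sq x); exact this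
  have h1 : HasFDerivAt (fun y : E4 => t.c * ((t.L.map (fun ν => y ν)).prod)) (t.c • Dp) x :=
    hp.const_mul t.c
  have htot := h1.mul hgq
  refine ⟨_, htot, ?_⟩
  intro ν
  simp only [ContinuousLinearMap.add_apply, ContinuousLinearMap.smul_apply, hpapp ν,
    norm_sq_deriv_apply, smul_eq_mul]
  simp only [step, List.map_cons, List.sum_cons, List.map_map]
  rw [show ((dels ν t.L).map ((fun s => val f s x) ∘ fun M => (⟨t.r, t.c, M⟩ : Tm))) =
      (dels ν t.L).map (fun M => (t.c * iteratedDeriv t.r f (‖x‖^2)) *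
        ((M.map (fun ν => x ν)).prod)) from List.map_congr_left (by
          intro M _
          simp [val]
          ring), list_sum_mul_left]
  simp only [val, List.map_cons, List.prod_cons]
  have hin : ((innerSL ℝ) x) (sing ν) = x ν := by
    simp [sing, EuclideanSpace.inner_single_right]
  ring_nf
  rw [hin]

lemma totalVal_hasFDerivAt {f : ℝ → ℝ} (T : List Tm)
    (hd : ∀ t ∈ T, Differentiable ℝ (iteratedDeriv t.r f)) (x : E4) :
    ∃ D : E4 →L[ℝ] ℝ, HasFDerivAt (totalVal f T) D x ∧
      ∀ ν, D (sing ν) = totalVal f (T.flatMap (step ν)) x := by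
  induction T with
  | nil => exact ⟨0, by have e : totalVal f [] = fun _ => (0:ℝ) := (by funext y; simp [totalVal]); rw [e]; exact hasFDerivAt_const (0:ℝ) x, by simp [totalVal]⟩
  | cons t T ih =>
      obtain ⟨D1, h1, h1app⟩ := val_hasFDerivAt t (hd t (by simp)) x
      obtain ⟨D2, h2, h2app⟩ := ih (fun s hs => hd s (by simp [hs]))
      refine ⟨D1 + D2, ?_, ?_⟩
      · have := h1.add h2
        have e : totalVal f (t :: T) = val f t + totalVal f T := by funext y; simp [totalVal]
        rw [e]; exact this
      · intro ν
        simp [ContinuousLinearMap.add_apply, h1app ν, h2app ν, totalVal, List.flatMap_cons,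
          list_sum_flat]


lemma totalVal_contDiff {w : ℕ} {f : ℝ → ℝ} (hf : ContDiff ℝ (w : ℕ∞) f) (T : List Tm) (n : ℕ)
    (h : ∀ t ∈ T, t.r + n ≤ w) : ContDiff ℝ (n : ℕ) (totalVal f T) := by
  induction T with
  | nil =>
      have : totalVal f [] = fun _ => (0:ℝ) := by funext x; simp [totalVal]
      rw [this]; exact contDiff_const
  | cons t T ih =>
      have h2 := (val_contDiff hf t n (h t (by simp))).add (ih fun s hs => h s (by simp [hs]))
      have : totalVal f (t :: T) = fun x => val f t x + totalVal f T x := by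
        funext x; simp [totalVal]
      rw [this]; exact h2

lemma repr_lemma {w : ℕ} {f : ℝ → ℝ} (hf : ContDiff ℝ (w : ℕ∞) f) :
    ∀ (n : ℕ) (T : List Tm), (∀ t ∈ T, t.r + n ≤ w) → ∀ (ν : Fin n → Fin 4) (x : E4),
      iteratedFDeriv ℝ n (totalVal f T) x (fun i => sing (ν i)) =
        totalVal f (iterT n ν T) x := by
  intro n
  induction n with
  | zero =>
      intro T hT ν x
      simp [iterT, iteratedFDeriv_zero_apply]
  | succ n ih =>
      intro T hT ν x
      have hdiff : ∀ t ∈ T, Differentiable ℝ (iteratedDeriv t.r f) := by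
        intro t ht
        refine hf.differentiable_iteratedDeriv t.r ?_
        have : t.r < w := by have := hT t ht; omega
        exact_mod_cast (by exact_mod_cast this : (t.r : ℕ∞) < (w : ℕ∞))
      have hcd : ContDiff ℝ ((n+1 : ℕ)) (totalVal f T) := totalVal_contDiff hf T (n+1) hT
      have hfd : ContDiff ℝ (n : ℕ) (fderiv ℝ (totalVal f T)) :=
        hcd.fderiv_right (by exact_mod_cast le_refl (n+1))
      set g : (E4 →L[ℝ] ℝ) →L[ℝ] ℝ :=
        ContinuousLinearMap.apply ℝ ℝ (sing (ν (Fin.last n))) with hg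
      have hcomp := g.iteratedFDeriv_comp_left (hfd.contDiffAt (x := x)) (le_refl ((n : ℕ) : WithTop ℕ∞))
      rw [iteratedFDeriv_succ_apply_right]
      have e1 : iteratedFDeriv ℝ n (fun y => fderiv ℝ (totalVal f T) y) x
            (Fin.init fun i => sing (ν i)) (sing (ν (Fin.last n)))
          = iteratedFDeriv ℝ n (fun y => fderiv ℝ (totalVal f T) y (sing (ν (Fin.last n)))) x
            (Fin.init fun i => sing (ν i)) := by
        rw [show (fun y => fderiv ℝ (totalVal f T) y (sing (ν (Fin.last n)))) =
            (g ∘ fun y => fderiv ℝ (totalVal f T) y) from rfl, hcomp]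
        rfl
      rw [e1]
      have e2 : (fun y => fderiv ℝ (totalVal f T) y (sing (ν (Fin.last n)))) =
          totalVal f (T.flatMap (step (ν (Fin.last n)))) := by
        funext y
        obtain ⟨D, hD, happ⟩ := totalVal_hasFDerivAt T hdiff y
        rw [hD.fderiv]
        exact happ _
      rw [e2]
      have hT' : ∀ t ∈ T.flatMap (step (ν (Fin.last n))), t.r + n ≤ w := by
        intro s hs
        rw [List.mem_flatMap] at hs
        obtain ⟨t, ht, hst⟩ := hs
        have := hT t ht
        rw [step, List.mem_cons] at hst
        rcases hst with h | h
        · subst h; simp; omega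
        · rw [List.mem_map] at h
          obtain ⟨M, _, rfl⟩ := h
          simp only []
          omega
      have := ih (T.flatMap (step (ν (Fin.last n)))) hT' (fun i => ν i.castSucc) x
      rw [show (Fin.init fun i => sing (ν i)) = (fun i : Fin n => sing (ν i.castSucc)) from
        rfl, this]
      rfl


def Shaped (n : ℕ) (t : Tm) : Prop := ∃ k, t.r + k = n ∧ t.L.length + 2*k = n

def ind (n k : ℕ) (t : Tm) : ℝ :=
  if t.r + k = n ∧ t.L.length + 2*k = n then |t.c| else 0

def Sk (n k : ℕ) (T : List Tm) : ℝ := (T.map (ind n k)).sum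

def B (n k : ℕ) : ℝ := 2^n * n.factorial / (((n - 2*k).factorial : ℝ) * (k.factorial : ℝ))

lemma ind_nonneg (n k t) : 0 ≤ ind n k t := by
  unfold ind; split <;> simp [abs_nonneg]

lemma ind_le_abs (n k t) : ind n k t ≤ |t.c| := by
  unfold ind; split <;> simp [abs_nonneg]

lemma Sk_nonneg (n k T) : 0 ≤ Sk n k T := by
  unfold Sk
  apply List.sum_nonneg
  intro a ha
  rw [List.mem_map] at ha
  obtain ⟨t, _, rfl⟩ := ha
  exact ind_nonneg n k t

lemma Sk_vanish (n k : ℕ) (T : List Tm) (h : n < 2*k) : Sk n k T = 0 := by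
  unfold Sk
  apply List.sum_eq_zero
  intro a ha
  rw [List.mem_map] at ha
  obtain ⟨t, _, rfl⟩ := ha
  unfold ind
  rw [if_neg (by omega)]

lemma B_nonneg (n k : ℕ) : 0 ≤ B n k := by
  unfold B; positivity

lemma dels_len (ν : Fin 4) : ∀ (L : List (Fin 4)), ∀ M ∈ dels ν L, M.length + 1 = L.length := by
  intro L
  induction L with
  | nil => simp [dels]
  | cons a L ih =>
      intro M hM
      simp only [dels, List.mem_append, List.mem_map] at hM
      rcases hM with hM | ⟨M', hM', rfl⟩
      · have : M = L := by by_cases h : a = ν <;> simp [h] at hM; exact hM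
        simp [this]
      · have := ih M' hM'
        simp; omega

lemma dels_card (ν : Fin 4) : ∀ (L : List (Fin 4)), (dels ν L).length ≤ L.length := by
  intro L
  induction L with
  | nil => simp [dels]
  | cons a L ih =>
      simp only [dels, List.length_append, List.length_map, List.length_cons]
      by_cases h : a = ν <;> simp [h] <;> omega

lemma step_shaped {n : ℕ} {t : Tm} (ν : Fin 4) (h : Shaped n t) :
    ∀ s ∈ step ν t, Shaped (n+1) s := by
  obtain ⟨k, h1, h2⟩ := h
  intro s hs
  rw [step, List.mem_cons] at hs
  rcases hs with rfl | hs
  · exact ⟨k, by simp; omega, by simp; omega⟩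
  · rw [List.mem_map] at hs
    obtain ⟨M, hM, rfl⟩ := hs
    have := dels_len ν t.L M hM
    exact ⟨k+1, by simp; omega, by simp; omega⟩

lemma list_sum_le_card {α : Type*} (l : List α) (c : ℝ) (F : α → ℝ)
    (h : ∀ a ∈ l, F a ≤ c) (hc : 0 ≤ c) : (l.map F).sum ≤ l.length * c := by
  induction l with
  | nil => simp
  | cons a l ih =>
      simp only [List.map_cons, List.sum_cons, List.length_cons]
      have := ih (fun a ha => h a (by simp [ha]))
      have ha := h a (by simp)
      push_cast
      linarith

lemma step_ind_bound_pos (ν : Fin 4) (n k : ℕ) (hk : 1 ≤ k) (t : Tm) (hsh : Shaped n t) :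
    ((step ν t).map (ind (n+1) k)).sum ≤
      2 * ind n k t + ((n + 2 - 2*k : ℕ) : ℝ) * ind n (k-1) t := by
  obtain ⟨k₀, hk1, hk2⟩ := hsh
  simp only [step, List.map_cons, List.sum_cons, List.map_map]
  have hchain : ind (n+1) k ⟨t.r+1, 2*t.c, ν :: t.L⟩ = 2 * ind n k t := by
    simp only [ind, List.length_cons]
    by_cases h : t.r + k = n ∧ t.L.length + 2*k = n
    · rw [if_pos (by omega), if_pos h, abs_mul]; simp
    · rw [if_neg (by omega), if_neg h]; ring
  rw [hchain]
  apply add_le_add_right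
  by_cases hA : t.r + k = n + 1 ∧ t.L.length + 2*k = n + 2
  · have hkk : k = k₀ + 1 := by omega
    have hind : ind n (k-1) t = |t.c| := by
      unfold ind; rw [if_pos (by omega)]
    rw [hind]
    have hlen : ∀ M ∈ dels ν t.L, (ind (n+1) k ∘ fun M => (⟨t.r, t.c, M⟩ : Tm)) M ≤ |t.c| := by
      intro M hM; exact ind_le_abs _ _ _
    calc ((dels ν t.L).map (ind (n+1) k ∘ fun M => (⟨t.r, t.c, M⟩ : Tm))).sum
        ≤ (dels ν t.L).length * |t.c| := list_sum_le_card _ _ _ hlen (abs_nonneg _)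
      _ ≤ ((n + 2 - 2*k : ℕ) : ℝ) * |t.c| := by
          have h1 := dels_card ν t.L
          have h2 : t.L.length = n + 2 - 2*k := by omega
          have : ((dels ν t.L).length : ℝ) ≤ ((n + 2 - 2*k : ℕ) : ℝ) := by
            exact_mod_cast by omega
          exact mul_le_mul_of_nonneg_right this (abs_nonneg _)
  · have hz : ((dels ν t.L).map (ind (n+1) k ∘ fun M => (⟨t.r, t.c, M⟩ : Tm))).sum = 0 := by
      apply List.sum_eq_zero
      intro a ha
      rw [List.mem_map] at ha
      obtain ⟨M, hM, rfl⟩ := ha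
      have := dels_len ν t.L M hM
      simp only [Function.comp_apply, ind]
      rw [if_neg (by omega)]
    rw [hz]
    exact mul_nonneg (by positivity) (ind_nonneg _ _ _)

lemma step_ind_bound_zero (ν : Fin 4) (n : ℕ) (t : Tm) (hsh : Shaped n t) :
    ((step ν t).map (ind (n+1) 0)).sum ≤ 2 * ind n 0 t := by
  obtain ⟨k₀, hk1, hk2⟩ := hsh
  simp only [step, List.map_cons, List.sum_cons, List.map_map]
  have hchain : ind (n+1) 0 ⟨t.r+1, 2*t.c, ν :: t.L⟩ = 2 * ind n 0 t := by
    simp only [ind, List.length_cons]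
    by_cases h : t.r + 0 = n ∧ t.L.length + 2*0 = n
    · rw [if_pos (by omega), if_pos h, abs_mul]; simp
    · rw [if_neg (by omega), if_neg h]; ring
  rw [hchain]
  have hz : ((dels ν t.L).map (ind (n+1) 0 ∘ fun M => (⟨t.r, t.c, M⟩ : Tm))).sum = 0 := by
    apply List.sum_eq_zero
    intro a ha
    rw [List.mem_map] at ha
    obtain ⟨M, hM, rfl⟩ := ha
    simp only [Function.comp_apply, ind]
    rw [if_neg (by omega)]
  rw [hz, add_zero]

lemma list_sum_add {α : Type*} (l : List α) (F G : α → ℝ) :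
    (l.map (fun a => F a + G a)).sum = (l.map F).sum + (l.map G).sum := by
  induction l with
  | nil => simp
  | cons a l ih => simp [ih]; ring

lemma flat_Sk_pos (ν : Fin 4) (n k : ℕ) (hk : 1 ≤ k) (T : List Tm)
    (hsh : ∀ t ∈ T, Shaped n t) :
    Sk (n+1) k (T.flatMap (step ν)) ≤
      2 * Sk n k T + ((n + 2 - 2*k : ℕ) : ℝ) * Sk n (k-1) T := by
  unfold Sk
  rw [list_sum_flat]
  calc (T.map (fun t => ((step ν t).map (ind (n+1) k)).sum)).sum
      ≤ (T.map (fun t => 2 * ind n k t + ((n + 2 - 2*k : ℕ) : ℝ) * ind n (k-1) t)).sum := by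
        apply List.sum_le_sum
        intro t ht
        exact step_ind_bound_pos ν n k hk t (hsh t ht)
    _ = 2 * (T.map (ind n k)).sum + ((n + 2 - 2*k : ℕ) : ℝ) * (T.map (ind n (k-1))).sum := by
        rw [list_sum_add]
        rw [show (fun t => 2 * ind n k t) = (fun t => (2:ℝ) * ind n k t) from rfl,
          list_sum_mul_left, list_sum_mul_left]

lemma flat_Sk_zero (ν : Fin 4) (n : ℕ) (T : List Tm) (hsh : ∀ t ∈ T, Shaped n t) :
    Sk (n+1) 0 (T.flatMap (step ν)) ≤ 2 * Sk n 0 T := by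
  unfold Sk
  rw [list_sum_flat]
  calc (T.map (fun t => ((step ν t).map (ind (n+1) 0)).sum)).sum
      ≤ (T.map (fun t => 2 * ind n 0 t)).sum := by
        apply List.sum_le_sum
        intro t ht
        exact step_ind_bound_zero ν n t (hsh t ht)
    _ = 2 * (T.map (ind n 0)).sum := by
        rw [show (fun t => 2 * ind n 0 t) = (fun t => (2:ℝ) * ind n 0 t) from rfl,
          list_sum_mul_left]


lemma B_zero (n : ℕ) : B n 0 = 2^n := by
  unfold B
  simp [Nat.factorial_ne_zero, mul_div_assoc, div_self]

lemma fact_pos (n : ℕ) : (0:ℝ) < (n.factorial : ℝ) := by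
  exact_mod_cast n.factorial_pos

lemma real_aux (c A K M ka aa : ℝ) (hc : 0 < c) (hA : 0 < A) (hK : 0 < K) (hM : 0 < M)
    (hk : 1 ≤ ka) (ha : 0 ≤ aa) :
    2 * (c * M / (A * (ka * K))) + (aa + 2) * (c * M / ((aa + 2) * ((aa + 1) * A) * K))
      ≤ 2 * c * ((aa + 2 * ka + 1) * M) / ((aa + 1) * A * (ka * K)) := by
  rw [← mul_div_assoc, ← mul_div_assoc,
    div_add_div _ _ (by positivity) (by positivity),
    div_le_div_iff₀ (by positivity) (by positivity)]
  have hP : (0:ℝ) ≤ (c * M * (A*A) * (K*K) * ka * (aa+1) * (aa+2)) * (3 * ka) := by positivity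
  nlinarith [hP]

lemma B_rec_main {m k : ℕ} (hk : 1 ≤ k) (h2 : 2*k ≤ m) :
    2 * B m k + ((m + 2 - 2*k : ℕ) : ℝ) * B m (k-1) ≤ B (m+1) k := by
  obtain ⟨a, ha⟩ : ∃ a, m = a + 2*k := ⟨m - 2*k, by omega⟩
  subst ha
  have e1 : a + 2*k - 2*k = a := by omega
  have e2 : a + 2*k - 2*(k-1) = a + 2 := by omega
  have e3 : a + 2*k + 1 - 2*k = a + 1 := by omega
  have e4 : a + 2*k + 2 - 2*k = a + 2 := by omega
  unfold B
  rw [e1, e2, e3, e4]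
  have hA := fact_pos a
  have hK := fact_pos (k-1)
  have hM := fact_pos (a + 2*k)
  have hk' : (k.factorial : ℝ) = k * (k-1).factorial := by
    rw [show k = (k-1) + 1 by omega]
    push_cast [Nat.factorial_succ]
    simp
  have ha1 : ((a+1).factorial : ℝ) = (a+1) * a.factorial := by
    push_cast [Nat.factorial_succ]; ring
  have ha2 : ((a+2).factorial : ℝ) = (a+2) * ((a+1) * a.factorial) := by
    push_cast [Nat.factorial_succ]; ring
  have hm1 : ((a + 2*k + 1).factorial : ℝ) = (a + 2*k + 1) * (a + 2*k).factorial := by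
    push_cast [Nat.factorial_succ]; ring
  rw [hk', ha1, ha2, hm1]
  have hkpos : (0:ℝ) < k := by exact_mod_cast hk
  have hapos : (0:ℝ) ≤ (a:ℝ) := Nat.cast_nonneg a
  have hc : (0:ℝ) < 2^(a + 2*k) := by positivity
  have h2k : ((2:ℝ))^(a + 2*k + 1) = 2 * 2^(a+2*k) := by ring
  rw [h2k]
  push_cast
  exact real_aux (2^(a+2*k)) (a.factorial) ((k-1).factorial) ((a+2*k).factorial) k a
    hc hA hK hM (by exact_mod_cast hk) hapos

lemma B_rec_edge {m k : ℕ} (hk : 1 ≤ k) (h2 : 2*k = m+1) :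
    ((m + 2 - 2*k : ℕ) : ℝ) * B m (k-1) ≤ B (m+1) k := by
  have e0 : m + 2 - 2*k = 1 := by omega
  have e2 : m - 2*(k-1) = 1 := by omega
  have e3 : m + 1 - 2*k = 0 := by omega
  unfold B
  rw [e0, e2, e3]
  have hK := fact_pos (k-1)
  have hM := fact_pos m
  have hk' : (k.factorial : ℝ) = k * (k-1).factorial := by
    rw [show k = (k-1) + 1 by omega]
    push_cast [Nat.factorial_succ]
    simp
  have hm1 : ((m+1).factorial : ℝ) = (m+1) * m.factorial := by
    push_cast [Nat.factorial_succ]; ring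
  rw [hk', hm1]
  simp only [Nat.factorial_one, Nat.factorial_zero, Nat.cast_one, one_mul]
  have hkpos : (0:ℝ) < k := by exact_mod_cast hk
  have hkle : (k:ℝ) ≤ m + 1 := by exact_mod_cast by omega
  rw [div_le_div_iff₀ (by positivity) (by positivity)]
  have h2k : ((2:ℝ))^(m+1) = 2 * 2^m := by ring
  rw [h2k]
  nlinarith [pow_pos (show (0:ℝ) < 2 by norm_num) m, mul_pos hK hM,
    mul_nonneg hK.le hM.le, mul_pos (pow_pos (show (0:ℝ) < 2 by norm_num) m) (mul_pos hK hM)]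

lemma iter_bound (n : ℕ) : ∀ (ν : Fin n → Fin 4) (T : List Tm) (m : ℕ),
    (∀ t ∈ T, Shaped m t) → (∀ k, Sk m k T ≤ B m k) →
    (∀ t ∈ iterT n ν T, Shaped (m+n) t) ∧ (∀ k, Sk (m+n) k (iterT n ν T) ≤ B (m+n) k) := by
  induction n with
  | zero => intro ν T m h1 h2; exact ⟨by simpa [iterT] using h1, by simpa [iterT] using h2⟩
  | succ n ih =>
      intro ν T m h1 h2
      set T' := T.flatMap (step (ν (Fin.last n))) with hT'
      have hsh' : ∀ t ∈ T', Shaped (m+1) t := by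
        intro t ht
        rw [hT', List.mem_flatMap] at ht
        obtain ⟨s, hs, hts⟩ := ht
        exact step_shaped _ (h1 s hs) t hts
      have hS' : ∀ k, Sk (m+1) k T' ≤ B (m+1) k := by
        intro k
        rcases Nat.eq_zero_or_pos k with rfl | hk
        · calc Sk (m+1) 0 T' ≤ 2 * Sk m 0 T := flat_Sk_zero _ m T h1
            _ ≤ 2 * B m 0 := by linarith [h2 0]
            _ ≤ B (m+1) 0 := by rw [B_zero, B_zero]; ring_nf; norm_num [pow_succ]
        · have hflat := flat_Sk_pos (ν (Fin.last n)) m k hk T h1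
          rcases lt_trichotomy (2*k) (m+1) with h3 | h3 | h3
          · have h4 : 2*k ≤ m := by omega
            calc Sk (m+1) k T' ≤ 2 * Sk m k T + ((m + 2 - 2*k : ℕ) : ℝ) * Sk m (k-1) T := hflat
              _ ≤ 2 * B m k + ((m + 2 - 2*k : ℕ) : ℝ) * B m (k-1) := by
                  have := h2 k
                  have := h2 (k-1)
                  have hc : (0:ℝ) ≤ ((m + 2 - 2*k : ℕ) : ℝ) := by positivity
                  nlinarith
              _ ≤ B (m+1) k := B_rec_main hk h4
          · have hz : Sk m k T = 0 := Sk_vanish m k T (by omega)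
            calc Sk (m+1) k T' ≤ 2 * Sk m k T + ((m + 2 - 2*k : ℕ) : ℝ) * Sk m (k-1) T := hflat
              _ ≤ ((m + 2 - 2*k : ℕ) : ℝ) * B m (k-1) := by
                  rw [hz]
                  have := h2 (k-1)
                  have hc : (0:ℝ) ≤ ((m + 2 - 2*k : ℕ) : ℝ) := by positivity
                  nlinarith
              _ ≤ B (m+1) k := B_rec_edge hk h3
          · have hz : Sk m k T = 0 := Sk_vanish m k T (by omega)
            have hc : ((m + 2 - 2*k : ℕ) : ℝ) = 0 := by
              norm_cast; omega
            calc Sk (m+1) k T' ≤ 2 * Sk m k T + ((m + 2 - 2*k : ℕ) : ℝ) * Sk m (k-1) T := hflat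
              _ = 0 := by rw [hz, hc]; ring
              _ ≤ B (m+1) k := B_nonneg _ _
      have := ih (fun i => ν i.castSucc) T' (m+1) hsh' hS'
      rw [show m + (n+1) = (m+1) + n by omega]
      exact this

lemma abs_prod_le (L : List (Fin 4)) (x : E4) :
    |(L.map (fun ν => x ν)).prod| ≤ ‖x‖ ^ L.length := by
  induction L with
  | nil => simp
  | cons a L ih =>
      simp only [List.map_cons, List.prod_cons, List.length_cons, abs_mul, pow_succ]
      rw [mul_comm (‖x‖ ^ L.length) ‖x‖]
      exact mul_le_mul (abs_coord_le x a) ih (abs_nonneg _) (norm_nonneg x)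

lemma group_bound (f : ℝ → ℝ) (n : ℕ) (T : List Tm) (x : E4) (hsh : ∀ t ∈ T, Shaped n t) :
    |totalVal f T x| ≤ ∑ k ∈ Finset.range (n/2 + 1),
      Sk n k T * ‖x‖ ^ (n - 2*k) * |iteratedDeriv (n-k) f (‖x‖^2)| := by
  induction T with
  | nil => simp [totalVal, Sk]
  | cons t T ih =>
      have h1 : |totalVal f (t :: T) x| ≤ |val f t x| + |totalVal f T x| := by
        simp only [totalVal, List.map_cons, List.sum_cons]
        exact abs_add_le _ _
      have h2 := ih (fun s hs => hsh s (by simp [hs]))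
      have h3 : |val f t x| ≤ ∑ k ∈ Finset.range (n/2 + 1),
          ind n k t * ‖x‖ ^ (n - 2*k) * |iteratedDeriv (n-k) f (‖x‖^2)| := by
        obtain ⟨k₀, hk1, hk2⟩ := hsh t (by simp)
        have hmem : k₀ ∈ Finset.range (n/2 + 1) := by
          rw [Finset.mem_range]; omega
        have hval : |val f t x| ≤ ind n k₀ t * ‖x‖ ^ (n - 2*k₀) *
            |iteratedDeriv (n-k₀) f (‖x‖^2)| := by
          have hind : ind n k₀ t = |t.c| := by unfold ind; rw [if_pos ⟨hk1, hk2⟩]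
          have hr : t.r = n - k₀ := by omega
          have hl : t.L.length = n - 2*k₀ := by omega
          rw [hind, ← hr]
          unfold val
          rw [abs_mul, abs_mul]
          rw [← hl]
          have hple := abs_prod_le t.L x
          have h0 : (0:ℝ) ≤ |iteratedDeriv t.r f (‖x‖^2)| := abs_nonneg _
          exact mul_le_mul_of_nonneg_right
            (mul_le_mul_of_nonneg_left hple (abs_nonneg t.c)) h0
        refine le_trans hval (Finset.single_le_sum (f := fun k =>
          ind n k t * ‖x‖ ^ (n - 2*k) * |iteratedDeriv (n-k) f (‖x‖^2)|) ?_ hmem)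
        intro k _
        exact mul_nonneg (mul_nonneg (ind_nonneg _ _ _) (by positivity)) (abs_nonneg _)
      have h4 : ∀ k, Sk n k (t :: T) = ind n k t + Sk n k T := by
        intro k; simp [Sk]
      calc |totalVal f (t :: T) x| ≤ |val f t x| + |totalVal f T x| := h1
        _ ≤ (∑ k ∈ Finset.range (n/2 + 1),
              ind n k t * ‖x‖ ^ (n - 2*k) * |iteratedDeriv (n-k) f (‖x‖^2)|) +
            (∑ k ∈ Finset.range (n/2 + 1),
              Sk n k T * ‖x‖ ^ (n - 2*k) * |iteratedDeriv (n-k) f (‖x‖^2)|) := by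
            exact add_le_add h3 h2
        _ = ∑ k ∈ Finset.range (n/2 + 1),
              Sk n k (t :: T) * ‖x‖ ^ (n - 2*k) * |iteratedDeriv (n-k) f (‖x‖^2)| := by
            rw [← Finset.sum_add_distrib]
            apply Finset.sum_congr rfl
            intro k _
            rw [h4 k]
            ring

end S17



theorem stmt_17 (w : ℕ) (f : ℝ → ℝ) (hf : ContDiff ℝ (w : ℕ∞) f)
    (μ : Fin w → Fin 4) (p : EuclideanSpace ℝ (Fin 4)) :
    |iteratedFDeriv ℝ w (fun p : EuclideanSpace ℝ (Fin 4) => f (‖p‖ ^ 2)) p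
        (fun i => EuclideanSpace.single (μ i) (1 : ℝ))| ≤
      2 ^ w * ∑ k ∈ Finset.range (w / 2 + 1),
        (w.factorial : ℝ) / (((w - 2 * k).factorial : ℝ) * (k.factorial : ℝ)) *
          ‖p‖ ^ (w - 2 * k) * |iteratedDeriv (w - k) f (‖p‖ ^ 2)| := by
  classical
  set T₀ : List S17.Tm := [⟨0, 1, []⟩] with hT₀def
  have h0 : (fun p : S17.E4 => f (‖p‖ ^ 2)) = S17.totalVal f T₀ := by
    funext x
    simp [S17.totalVal, S17.val, hT₀def]
  have hT0 : ∀ t ∈ T₀, t.r + w ≤ w := by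
    intro t ht
    rw [hT₀def, List.mem_singleton] at ht
    subst ht
    simp
  have hrepr := S17.repr_lemma hf w T₀ hT0 μ p
  have hsh0 : ∀ t ∈ T₀, S17.Shaped 0 t := by
    intro t ht
    rw [hT₀def, List.mem_singleton] at ht
    subst ht
    exact ⟨0, by simp, by simp⟩
  have hS0 : ∀ k, S17.Sk 0 k T₀ ≤ S17.B 0 k := by
    intro k
    rcases Nat.eq_zero_or_pos k with rfl | hk
    · simp [S17.Sk, S17.ind, S17.B, hT₀def]
    · have : S17.Sk 0 k T₀ = 0 := S17.Sk_vanish 0 k T₀ (by omega)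
      rw [this]
      exact S17.B_nonneg 0 k
  obtain ⟨hshw, hSw⟩ := S17.iter_bound w μ T₀ 0 hsh0 hS0
  rw [zero_add] at hshw hSw
  have hgroup := S17.group_bound f w (S17.iterT w μ T₀) p hshw
  have hmain : |iteratedFDeriv ℝ w (fun p : S17.E4 => f (‖p‖ ^ 2)) p
      (fun i => EuclideanSpace.single (μ i) (1 : ℝ))| =
      |S17.totalVal f (S17.iterT w μ T₀) p| := by
    rw [h0]
    rw [show (fun i => EuclideanSpace.single (μ i) (1:ℝ)) = (fun i => S17.sing (μ i)) from rfl]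
    rw [hrepr]
  rw [hmain]
  refine le_trans hgroup ?_
  rw [Finset.mul_sum]
  apply Finset.sum_le_sum
  intro k _
  have h1 : S17.Sk w k (S17.iterT w μ T₀) ≤ S17.B w k := hSw k
  have h2 : S17.B w k = 2^w * ((w.factorial : ℝ) /
      (((w - 2 * k).factorial : ℝ) * (k.factorial : ℝ))) := by
    rw [S17.B, mul_div_assoc]
  calc S17.Sk w k (S17.iterT w μ T₀) * ‖p‖ ^ (w - 2*k) * |iteratedDeriv (w-k) f (‖p‖^2)|
      ≤ S17.B w k * ‖p‖ ^ (w - 2*k) * |iteratedDeriv (w-k) f (‖p‖^2)| := by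
        exact mul_le_mul_of_nonneg_right (mul_le_mul_of_nonneg_right h1 (by positivity))
          (abs_nonneg _)
    _ = 2 ^ w * ((w.factorial : ℝ) / (((w - 2 * k).factorial : ℝ) * (k.factorial : ℝ)) *
          ‖p‖ ^ (w - 2 * k) * |iteratedDeriv (w - k) f (‖p‖ ^ 2)|) := by
        rw [h2]; ring
end
end

section
/- Let 0 ≤ β ≤ 1 and h(x) := (e^{−βx²} − e^{−x²})/x for x > 0 (extended continuously at 0 by 0). Then for every natural number w and every constant C > 1, |h^{(w)}(x)| < w! e (C+1) (2√e C)^w / (1+x)^{w+1} for all x ≥ 0. -/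
open MeasureTheory Real Set Filter Nat


def Gc (w k : ℕ) : ℕ := w.descFactorial k * (w - k).choose k * 2 ^ (w - 2 * k)

lemma Gc_zero {w k : ℕ} (h : w < 2 * k) : Gc w k = 0 := by
  unfold Gc
  rcases Nat.lt_or_ge w k with h' | h'
  · rw [Nat.descFactorial_eq_zero_iff_lt.2 h']; ring
  · rw [Nat.choose_eq_zero_of_lt (by omega)]; ring

lemma Gc_succ_zero (w : ℕ) : Gc (w+1) 0 = 2 * Gc w 0 := by
  simp [Gc, pow_succ]; ring

lemma cast_descFactorial (n k : ℕ) (h : k ≤ n) :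
    (n.descFactorial k : ℚ) = (n)! / ((n - k))! := by
  rw [eq_div_iff (by exact_mod_cast (n-k).factorial_ne_zero)]
  rw [← Nat.cast_mul, mul_comm, Nat.factorial_mul_descFactorial h]

lemma Gc_rec (w k : ℕ) : Gc (w+1) (k+1) = 2 * Gc w (k+1) + (w - 2*k) * Gc w k := by
  rcases Nat.lt_or_ge w (2*k+1) with h | h
  · have h1 : Gc (w+1) (k+1) = 0 := Gc_zero (by omega)
    have h2 : Gc w (k+1) = 0 := Gc_zero (by omega)
    have h3 : w - 2*k = 0 := by omega
    simp [h1, h2, h3]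
  rcases Nat.lt_or_ge w (2*k+2) with h2 | h2
  · -- w = 2k+1
    have hw : w = 2*k+1 := by omega
    subst hw
    have hz : Gc (2*k+1) (k+1) = 0 := by
      unfold Gc
      rw [show 2*k+1 - (k+1) = k by omega, Nat.choose_eq_zero_of_lt (by omega)]; ring
    rw [hz]
    unfold Gc
    rw [show 2*k+1+1 - (k+1) = k+1 by omega, show 2*k+1+1 - 2*(k+1) = 0 by omega,
      Nat.choose_self, show 2*k+1 - k = k+1 by omega, show 2*k+1 - 2*k = 1 by omega,
      Nat.succ_descFactorial_succ, Nat.choose_succ_self_right]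
    ring
  · -- w ≥ 2k+2
    obtain ⟨d, rfl⟩ : ∃ d, w = 2*k+2+d := ⟨w - (2*k+2), by omega⟩
    have key : ((Gc (2*k+2+d+1) (k+1) : ℚ)) = 2 * Gc (2*k+2+d) (k+1)
        + ((2*k+2+d - 2*k : ℕ) : ℚ) * Gc (2*k+2+d) k := by
      unfold Gc
      rw [show 2*k+2+d+1 - (k+1) = k+2+d by omega, show 2*k+2+d+1 - 2*(k+1) = d+1 by omega,
        show 2*k+2+d - (k+1) = k+1+d by omega, show 2*k+2+d - 2*(k+1) = d by omega,
        show 2*k+2+d - k = k+2+d by omega, show 2*k+2+d - 2*k = d+2 by omega]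
      push_cast
      rw [cast_descFactorial (2*k+2+d+1) (k+1) (by omega),
        cast_descFactorial (2*k+2+d) (k+1) (by omega),
        cast_descFactorial (2*k+2+d) k (by omega),
        Nat.cast_choose ℚ (show k+1 ≤ k+2+d by omega),
        Nat.cast_choose ℚ (show k+1 ≤ k+1+d by omega),
        Nat.cast_choose ℚ (show k ≤ k+2+d by omega)]
      rw [show 2*k+2+d+1 - (k+1) = k+2+d by omega, show 2*k+2+d - (k+1) = k+1+d by omega,
        show 2*k+2+d - k = k+2+d by omega, show k+2+d - (k+1) = d+1 by omega,
        show k+1+d - (k+1) = d by omega, show k+2+d - k = d+2 by omega]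
      have e1 : ((2*k+2+d+1)! : ℚ) = (2*k+2+d+1) * (2*k+2+d)! := by
        rw [Nat.factorial_succ]; push_cast; ring
      have e2 : ((k+2+d)! : ℚ) = (k+2+d) * (k+1+d)! := by
        rw [show k+2+d = (k+1+d)+1 by omega, Nat.factorial_succ]; push_cast; ring
      have e3 : ((d+2)! : ℚ) = (d+2) * (d+1) * (d)! := by
        rw [show d+2 = (d+1)+1 by omega, Nat.factorial_succ, Nat.factorial_succ]; push_cast; ring
      have e4 : ((d+1)! : ℚ) = (d+1) * (d)! := by
        rw [Nat.factorial_succ]; push_cast; ring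
      have e5 : ((k+1)! : ℚ) = (k+1) * (k)! := by
        rw [Nat.factorial_succ]; push_cast; ring
      rw [e1, e2, e3, e4, e5]
      have p1 : ((k+1+d)! : ℚ) ≠ 0 := by exact_mod_cast (k+1+d).factorial_ne_zero
      have p2 : ((d)! : ℚ) ≠ 0 := by exact_mod_cast (d).factorial_ne_zero
      have p3 : ((k)! : ℚ) ≠ 0 := by exact_mod_cast (k).factorial_ne_zero
      push_cast
      field_simp
      ring
    exact_mod_cast key


noncomputable def Fj (β : ℝ) (j : ℕ) (y : ℝ) : ℝ :=
  ∫ s in Set.Ioc β 1, (-s) ^ j * Real.exp (-(s * y))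

lemma integrableOn_pow_exp {r : ℝ} (hr : 0 < r) (j : ℕ) :
    IntegrableOn (fun t : ℝ => t ^ j * Real.exp (-(r * t))) (Ioi 0) := by
  apply integrable_of_isBigO_exp_neg (half_pos hr) (by fun_prop)
  have h0 : Filter.Tendsto (fun t : ℝ => t ^ (j:ℝ) * Real.exp (-(r/2) * t)) atTop (nhds 0) :=
    tendsto_rpow_mul_exp_neg_mul_atTop_nhds_zero _ _ (half_pos hr)
  have h1 : (fun t : ℝ => t ^ (j:ℝ) * Real.exp (-(r/2) * t)) =O[atTop] (fun _ : ℝ => (1:ℝ)) :=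
    h0.isBigO_one ℝ
  have h2 := h1.mul (Asymptotics.isBigO_refl (fun t : ℝ => Real.exp (-(r/2) * t)) atTop)
  apply h2.congr' _ (by filter_upwards with t using one_mul _)
  filter_upwards [eventually_ge_atTop (0:ℝ)] with t ht
  rw [Real.rpow_natCast, mul_assoc, ← Real.exp_add]
  ring_nf

lemma value_pow_exp {r : ℝ} (hr : 0 < r) (j : ℕ) :
    ∫ t : ℝ in Ioi 0, t ^ j * Real.exp (-(r * t)) = (j)! / r ^ (j+1) := by
  have h := Real.integral_rpow_mul_exp_neg_mul_Ioi (a := (j:ℝ)+1) (by positivity) hr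
  rw [show ((j:ℝ)+1)-1 = (j:ℝ) by ring] at h
  simp_rw [Real.rpow_natCast] at h
  rw [show ((j:ℝ)+1) = ((j:ℕ):ℝ)+1 by push_cast; ring, Real.Gamma_nat_eq_factorial,
    show ((j:ℝ)+1) = ((j+1 : ℕ):ℝ) by push_cast; ring, Real.rpow_natCast] at h
  rw [h, div_pow, one_pow]
  field_simp

lemma Fj_bound {β : ℝ} (hβ : 0 ≤ β) (j : ℕ) {y : ℝ} (hy : 0 ≤ y) :
    |Fj β j y| ≤ Real.exp 1 * (j)! / (1+y) ^ (j+1) := by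
  have hr : (0:ℝ) < 1 + y := by linarith
  have hint : IntegrableOn (fun t : ℝ => t ^ j * Real.exp (-((1+y) * t))) (Ioi 0) :=
    integrableOn_pow_exp hr j
  have hint01 : IntegrableOn (fun t : ℝ => t ^ j * Real.exp (-((1+y) * t))) (Ioc 0 1) :=
    hint.mono_set Ioc_subset_Ioi_self
  have hnrm : IntegrableOn (fun s : ℝ => ‖(-s) ^ j * Real.exp (-(s * y))‖) (Ioc 0 1) := by
    apply Integrable.mono' (integrable_const (1:ℝ))
      (Continuous.aestronglyMeasurable (by fun_prop))
    filter_upwards [ae_restrict_mem measurableSet_Ioc] with s hs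
    rw [norm_norm, norm_mul, norm_pow, norm_neg, Real.norm_eq_abs, Real.norm_eq_abs,
      abs_of_pos hs.1, Real.abs_exp]
    have h1 : s ^ j ≤ 1 := pow_le_one₀ hs.1.le hs.2
    have h2 : Real.exp (-(s * y)) ≤ 1 := by
      rw [Real.exp_le_one_iff]
      nlinarith [hs.1.le, hs.2]
    nlinarith [Real.exp_pos (-(s*y)), pow_nonneg hs.1.le j]
  calc |Fj β j y| ≤ ∫ s in Ioc β 1, ‖(-s) ^ j * Real.exp (-(s * y))‖ := by
        rw [← Real.norm_eq_abs]; exact norm_integral_le_integral_norm _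
    _ ≤ ∫ s in Ioc 0 1, ‖(-s) ^ j * Real.exp (-(s * y))‖ := by
        apply setIntegral_mono_set hnrm
        · filter_upwards with s using norm_nonneg _
        · exact HasSubset.Subset.eventuallyLE (Ioc_subset_Ioc_left hβ)
    _ ≤ ∫ s in Ioc 0 1, Real.exp 1 * (s ^ j * Real.exp (-((1+y) * s))) := by
        apply setIntegral_mono_on hnrm (hint01.const_mul _) measurableSet_Ioc
        intro s hs
        rw [norm_mul, norm_pow, norm_neg, Real.norm_eq_abs, Real.norm_eq_abs,
          abs_of_pos hs.1, Real.abs_exp]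
        have key : Real.exp (-(s * y)) ≤ Real.exp 1 * Real.exp (-((1+y) * s)) := by
          rw [← Real.exp_add, Real.exp_le_exp]
          nlinarith [hs.2]
        nlinarith [pow_nonneg hs.1.le j, Real.exp_pos (-(s*y)),
          Real.exp_pos (-((1+y)*s)), Real.exp_pos (1:ℝ),
          mul_le_mul_of_nonneg_left key (pow_nonneg hs.1.le j)]
    _ = Real.exp 1 * ∫ s in Ioc 0 1, s ^ j * Real.exp (-((1+y) * s)) := by
        rw [integral_const_mul]
    _ ≤ Real.exp 1 * ∫ s in Ioi 0, s ^ j * Real.exp (-((1+y) * s)) := by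
        apply mul_le_mul_of_nonneg_left _ (Real.exp_pos 1).le
        apply setIntegral_mono_set hint
        · filter_upwards [ae_restrict_mem measurableSet_Ioi] with s hs
          exact mul_nonneg (pow_nonneg (le_of_lt hs) j) (Real.exp_pos _).le
        · exact HasSubset.Subset.eventuallyLE Ioc_subset_Ioi_self
    _ = Real.exp 1 * ((j)! / (1+y) ^ (j+1)) := by rw [value_pow_exp hr j]
    _ = Real.exp 1 * (j)! / (1+y) ^ (j+1) := by ring

lemma Fj_hasDeriv {β : ℝ} (hβ : 0 ≤ β) (j : ℕ) (y : ℝ) :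
    HasDerivAt (Fj β j) (Fj β (j+1) y) y := by
  have hmeas : ∀ x : ℝ, ∀ i : ℕ, AEStronglyMeasurable (fun s : ℝ => (-s) ^ i * Real.exp (-(s * x)))
      (volume.restrict (Ioc β 1)) := by
    intro x i; exact (Continuous.aestronglyMeasurable (by fun_prop))
  have hmem : ∀ᵐ s ∂(volume.restrict (Ioc β 1)), s ∈ Ioc β 1 :=
    ae_restrict_mem measurableSet_Ioc
  have key := hasDerivAt_integral_of_dominated_loc_of_deriv_le
    (F := fun x s => (-s) ^ j * Real.exp (-(s * x)))
    (F' := fun x s => (-s) ^ (j+1) * Real.exp (-(s * x)))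
    (x₀ := y) (s := Metric.ball y 1) (μ := volume.restrict (Ioc β 1))
    (bound := fun _ => Real.exp (|y| + 1))
    (Metric.ball_mem_nhds y one_pos) (Filter.Eventually.of_forall (fun x => hmeas x j)) ?_ (hmeas y (j+1)) ?_ ?_ ?_
  · exact key.2
  · -- Integrable (F y)
    apply Integrable.mono' (integrable_const (Real.exp (|y| + 1))) (hmeas y j)
    filter_upwards [hmem] with s hs
    have hs0 : 0 < s := lt_of_le_of_lt hβ hs.1
    rw [norm_mul, norm_pow, norm_neg, Real.norm_eq_abs, Real.norm_eq_abs,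
      abs_of_pos hs0, Real.abs_exp]
    have h1 : s ^ j ≤ 1 := pow_le_one₀ hs0.le hs.2
    have h2 : Real.exp (-(s * y)) ≤ Real.exp (|y| + 1) := by
      apply Real.exp_le_exp.2
      have : |s * y| ≤ |y| := by
        rw [abs_mul, abs_of_pos hs0]
        nlinarith [abs_nonneg y, hs.2]
      nlinarith [neg_abs_le (s*y)]
    nlinarith [Real.exp_pos (-(s*y)), pow_nonneg hs0.le j]
  · -- bound for F'
    filter_upwards [hmem] with s hs x hx
    have hs0 : 0 < s := lt_of_le_of_lt hβ hs.1
    rw [norm_mul, norm_pow, norm_neg, Real.norm_eq_abs, Real.norm_eq_abs,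
      abs_of_pos hs0, Real.abs_exp]
    have h1 : s ^ (j+1) ≤ 1 := pow_le_one₀ hs0.le hs.2
    have hxy : |x| ≤ |y| + 1 := by
      have := Metric.mem_ball.1 hx
      rw [Real.dist_eq] at this
      calc |x| = |y + (x - y)| := by ring_nf
      _ ≤ |y| + |x - y| := abs_add_le _ _
      _ ≤ |y| + 1 := by linarith
    have h2 : Real.exp (-(s * x)) ≤ Real.exp (|y| + 1) := by
      apply Real.exp_le_exp.2
      have : |s * x| ≤ |x| := by
        rw [abs_mul, abs_of_pos hs0]
        nlinarith [abs_nonneg x, hs.2]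
      have := neg_abs_le (s*x)
      linarith
    nlinarith [Real.exp_pos (-(s*x)), pow_nonneg hs0.le (j+1)]
  · exact integrable_const _
  · -- differentiability
    filter_upwards [hmem] with s _ x _
    have hinner : HasDerivAt (fun x : ℝ => -(s * x)) (-s) x := by
      exact ((hasDerivAt_id x).const_mul s).neg.congr_deriv (by ring : -(s * 1) = -s)
    have h := (Real.hasDerivAt_exp (-(s * x))).comp x hinner
    have h2 := h.const_mul ((-s) ^ j)
    refine h2.congr_deriv ?_
    rw [pow_succ]
    ring

noncomputable def Gf (β : ℝ) (w : ℕ) (x : ℝ) : ℝ :=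
  ∑ k ∈ Finset.range (w + 1), (Gc w k : ℝ) * x ^ (w - 2*k) * Fj β (w - k) (x ^ 2)

lemma Gf_deriv_eq (β x : ℝ) (w : ℕ) : (∑ k ∈ Finset.range (w+1),
    ((Gc w k : ℝ) * (↑(w - 2*k) * x ^ (w - 2*k - 1)) * Fj β (w-k) (x^2)
      + (Gc w k : ℝ) * x ^ (w - 2*k) * (Fj β (w-k+1) (x^2) * (2*x))))
    = Gf β (w+1) x := by
  rw [Finset.sum_add_distrib]
  unfold Gf
  rw [Finset.sum_range_succ'
    (fun k => (Gc (w+1) k : ℝ) * x ^ (w+1-2*k) * Fj β (w+1-k) (x^2)) (w+1)]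
  have split : ∀ k ∈ Finset.range (w+1),
      (Gc (w+1) (k+1) : ℝ) * x ^ (w+1-2*(k+1)) * Fj β (w+1-(k+1)) (x^2)
      = 2*(Gc w (k+1) : ℝ) * x ^ (w+1-2*(k+1)) * Fj β (w+1-(k+1)) (x^2)
        + ((w-2*k : ℕ) : ℝ) * (Gc w k : ℝ) * x ^ (w+1-2*(k+1)) * Fj β (w+1-(k+1)) (x^2) := by
    intro k _
    rw [Gc_rec]; push_cast; ring
  rw [Finset.sum_congr rfl split, Finset.sum_add_distrib]
  have hS1 : ∑ k ∈ Finset.range (w+1),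
      (Gc w k : ℝ) * (↑(w - 2*k) * x ^ (w - 2*k - 1)) * Fj β (w-k) (x^2)
      = ∑ k ∈ Finset.range (w+1),
      ((w-2*k : ℕ) : ℝ) * (Gc w k : ℝ) * x ^ (w+1-2*(k+1)) * Fj β (w+1-(k+1)) (x^2) := by
    apply Finset.sum_congr rfl
    intro k hk
    rw [show w + 1 - 2*(k+1) = w - 2*k - 1 by omega, show w + 1 - (k+1) = w - k by omega]
    ring
  have hS2 : ∑ k ∈ Finset.range (w+1),
      (Gc w k : ℝ) * x ^ (w - 2*k) * (Fj β (w-k+1) (x^2) * (2*x))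
      = (∑ k ∈ Finset.range (w+1),
          2*(Gc w (k+1) : ℝ) * x ^ (w+1-2*(k+1)) * Fj β (w+1-(k+1)) (x^2))
        + (Gc (w+1) 0 : ℝ) * x ^ (w+1-2*0) * Fj β (w+1-0) (x^2) := by
    rw [Finset.sum_range_succ'
      (fun k => (Gc w k : ℝ) * x ^ (w - 2*k) * (Fj β (w-k+1) (x^2) * (2*x))) w]
    rw [Finset.sum_range_succ
      (fun k => 2*(Gc w (k+1) : ℝ) * x ^ (w+1-2*(k+1)) * Fj β (w+1-(k+1)) (x^2)) w]
    have hzero : 2*(Gc w (w+1) : ℝ) * x ^ (w+1-2*(w+1)) * Fj β (w+1-(w+1)) (x^2) = 0 := by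
      rw [Gc_zero (by omega)]; push_cast; ring
    rw [hzero, add_zero]
    congr 1
    · apply Finset.sum_congr rfl
      intro k hk
      have hk' : k < w := Finset.mem_range.1 hk
      rcases le_or_gt (2*(k+1)) w with hle | hlt
      · obtain ⟨m, hm⟩ : ∃ m, w = 2*k+2+m := ⟨w - (2*k+2), by omega⟩
        subst hm
        rw [show 2*k+2+m - 2*(k+1) = m by omega, show 2*k+2+m+1 - 2*(k+1) = m+1 by omega,
          show 2*k+2+m - (k+1) + 1 = k+m+2 by omega, show 2*k+2+m+1 - (k+1) = k+m+2 by omega]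
        ring
      · rw [Gc_zero (show w < 2*(k+1) by omega)]
        push_cast; ring
    · simp only [Nat.mul_zero, Nat.sub_zero]
      rw [Gc_succ_zero]
      push_cast; ring
  rw [hS1, hS2]
  ring

lemma Gf_hasDeriv {β : ℝ} (hβ : 0 ≤ β) (w : ℕ) (x : ℝ) :
    HasDerivAt (Gf β w) (Gf β (w+1) x) x := by
  have hterm : ∀ k, HasDerivAt
      (fun x : ℝ => (Gc w k : ℝ) * x ^ (w - 2*k) * Fj β (w-k) (x^2))
      ((Gc w k : ℝ) * (↑(w - 2*k) * x ^ (w - 2*k - 1)) * Fj β (w-k) (x^2)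
        + (Gc w k : ℝ) * x ^ (w - 2*k) * (Fj β (w-k+1) (x^2) * (2*x))) x := by
    intro k
    have h1 : HasDerivAt (fun x : ℝ => (Gc w k : ℝ) * x ^ (w-2*k))
        ((Gc w k : ℝ) * (↑(w-2*k) * x ^ (w-2*k-1))) x := (hasDerivAt_pow _ x).const_mul _
    have h2 : HasDerivAt (fun x : ℝ => Fj β (w-k) (x^2)) (Fj β (w-k+1) (x^2) * (2*x)) x := by
      have hin : HasDerivAt (fun x : ℝ => x^2) (2*x) x := by
        simpa using hasDerivAt_pow 2 x
      exact (Fj_hasDeriv hβ (w-k) (x^2)).comp x hin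
    exact h1.mul h2
  have hsum := HasDerivAt.sum (fun k (_ : k ∈ Finset.range (w+1)) => hterm k)
  rw [Gf_deriv_eq β x w] at hsum
  have hG : Gf β w = ∑ i ∈ Finset.range (w + 1),
      fun x : ℝ => (Gc w i : ℝ) * x ^ (w - 2 * i) * Fj β (w - i) (x ^ 2) := by
    funext y
    simp only [Gf, Finset.sum_apply]
  rw [hG]
  exact hsum

lemma iter_h {β : ℝ} (hβ : 0 ≤ β) (w : ℕ) :
    iteratedDeriv w (fun t : ℝ => t * Fj β 0 (t^2)) =
      fun x => x * Gf β w x + (w:ℝ) * Gf β (w-1) x := by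
  induction w with
  | zero =>
    funext x
    simp [iteratedDeriv_zero, Gf, Gc]
  | succ n ih =>
    rw [iteratedDeriv_succ, ih]
    funext x
    have h1 : HasDerivAt (fun x : ℝ => x * Gf β n x + (n:ℝ) * Gf β (n-1) x)
        (1 * Gf β n x + x * Gf β (n+1) x + (n:ℝ) * Gf β (n-1+1) x) x :=
      ((hasDerivAt_id x).mul (Gf_hasDeriv hβ n x)).add
        ((Gf_hasDeriv hβ (n-1) x).const_mul _)
    rw [h1.deriv]
    rcases Nat.eq_zero_or_pos n with h | h
    · subst h; push_cast; ring_nf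
    · rw [show n - 1 + 1 = n by omega, show n + 1 - 1 = n by omega]
      push_cast; ring

lemma fun_eq {β : ℝ} (hβ1 : β ≤ 1) :
    (fun t : ℝ => if t = 0 then 0
        else (Real.exp (-β * t ^ 2) - Real.exp (-t ^ 2)) / t) =
      fun t : ℝ => t * Fj β 0 (t ^ 2) := by
  funext t
  by_cases ht : t = 0
  · subst ht; simp
  · rw [if_neg ht]
    have hc : (0:ℝ) < t^2 := by positivity
    have hval : Fj β 0 (t^2) = (Real.exp (-(β * t^2)) - Real.exp (-t^2)) / t^2 := by
      unfold Fj
      have h1 : ∫ s in Set.Ioc β 1, (-s)^(0:ℕ) * Real.exp (-(s * t^2))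
          = ∫ s in β..1, Real.exp (-(s * t^2)) := by
        rw [intervalIntegral.integral_of_le hβ1]
        simp
      rw [h1]
      have hftc : ∀ s ∈ Set.uIcc β 1, HasDerivAt (fun u : ℝ => -Real.exp (-(u * t^2)) / t^2)
          (Real.exp (-(s * t^2))) s := by
        intro s _
        have hin : HasDerivAt (fun u : ℝ => -(u * t^2)) (-t^2) s := by
          exact (hasDerivAt_mul_const (t^2) (x := s)).neg
        have h := ((Real.hasDerivAt_exp (-(s * t^2))).comp s hin).neg.div_const (t^2)
        refine h.congr_deriv ?_
        field_simp
      rw [intervalIntegral.integral_eq_sub_of_hasDerivAt hftc (Continuous.intervalIntegrable (by fun_prop) _ _)]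
      rw [one_mul]
      ring
    rw [hval]
    rw [show -(β * t^2) = -β * t^2 by ring]
    field_simp

lemma nA {x : ℝ} (hx : 0 ≤ x) : x*(1+x) ≤ 1.21*(1+x^2) := by
  nlinarith [sq_nonneg (x - 50/21)]

lemma nB (x : ℝ) : (1+x)^2 ≤ 2*(1+x^2) := by nlinarith [sq_nonneg (1-x)]

lemma core1 {x : ℝ} (hx : 0 ≤ x) (k m : ℕ) :
    x^(m+1) * (1+x)^(2*k+m+1) ≤ 1.21^(m+1) * 2^k * (1+x^2)^(k+m+1) := by
  have h1 : (x*(1+x))^(m+1) ≤ (1.21*(1+x^2))^(m+1) :=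
    pow_le_pow_left₀ (by positivity) (nA hx) _
  have h2 : ((1+x)^2)^k ≤ (2*(1+x^2))^k :=
    pow_le_pow_left₀ (by positivity) (nB x) _
  calc x^(m+1) * (1+x)^(2*k+m+1) = (x*(1+x))^(m+1) * ((1+x)^2)^k := by
        rw [mul_pow, ← pow_mul, show 2*k+m+1 = (m+1)+2*k by omega, pow_add]; ring
    _ ≤ (1.21*(1+x^2))^(m+1) * (2*(1+x^2))^k :=
        mul_le_mul h1 h2 (by positivity) (by positivity)
    _ = 1.21^(m+1) * 2^k * (1+x^2)^(k+m+1) := by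
      rw [mul_pow, mul_pow, show k+m+1 = (m+1)+k by omega, pow_add]; ring

lemma core2 {x : ℝ} (hx : 0 ≤ x) (k m : ℕ) :
    x^m * (1+x)^(2*k+m+2) ≤ 1.21^m * 2^(k+1) * (1+x^2)^(k+m+1) := by
  have h1 : (x*(1+x))^m ≤ (1.21*(1+x^2))^m :=
    pow_le_pow_left₀ (by positivity) (nA hx) _
  have h2 : ((1+x)^2)^(k+1) ≤ (2*(1+x^2))^(k+1) :=
    pow_le_pow_left₀ (by positivity) (nB x) _
  calc x^m * (1+x)^(2*k+m+2) = (x*(1+x))^m * ((1+x)^2)^(k+1) := by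
        rw [mul_pow, ← pow_mul, show 2*k+m+2 = m+2*(k+1) by omega, pow_add]; ring
    _ ≤ (1.21*(1+x^2))^m * (2*(1+x^2))^(k+1) :=
        mul_le_mul h1 h2 (by positivity) (by positivity)
    _ = 1.21^m * 2^(k+1) * (1+x^2)^(k+m+1) := by
      rw [mul_pow, mul_pow, show k+m+1 = m+(k+1) by omega, pow_add]; ring

lemma Gc_fact (k m : ℕ) :
    (Gc (2*k+m) k) * (k+m)! = (2*k+m)! * ((k+m).choose k) * 2^m := by
  unfold Gc
  rw [show 2*k+m - k = k+m by omega, show 2*k+m - 2*k = m by omega]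
  have h := Nat.factorial_mul_descFactorial (show k ≤ 2*k+m by omega)
  rw [show 2*k+m-k = k+m by omega] at h
  rw [← h]; ring

lemma lit1 (k m : ℕ) : ((2:ℝ)/2.42)^k * 2.42^(k+m) * 1.21 = 1.21^(m+1) * 2^k * 2^m := by
  rw [div_pow, pow_add, show (2.42:ℝ) = 2*1.21 by norm_num, mul_pow, mul_pow]
  have h2 : ((2:ℝ)*1.21)^k ≠ 0 := by norm_num
  field_simp
  ring

lemma term1 {β : ℝ} (hβ : 0 ≤ β) (w k : ℕ) {x : ℝ} (hx : 0 ≤ x) :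
    x * |(Gc w k : ℝ) * x ^ (w - 2*k) * Fj β (w-k) (x^2)| * (1+x)^(w+1)
      ≤ Real.exp 1 * ((w)! : ℝ) * (1.21 * ((2/2.42)^k * 2.42^(w-k) * (w.choose k : ℝ))) := by
  rcases le_or_gt (2*k) w with hle | hlt
  · obtain ⟨m, rfl⟩ : ∃ m, w = 2*k + m := ⟨w - 2*k, by omega⟩
    rw [show 2*k+m - 2*k = m by omega, show 2*k+m - k = k+m by omega]
    have hP : (0:ℝ) < (1+x^2)^(k+m+1) := by positivity
    have hF : |Fj β (k+m) (x^2)| ≤ Real.exp 1 * ((k+m)! : ℝ) / (1+x^2)^(k+m+1) :=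
      Fj_bound hβ (k+m) (by positivity)
    have hc : (0:ℝ) ≤ (Gc (2*k+m) k : ℝ) := Nat.cast_nonneg _
    calc x * |(Gc (2*k+m) k : ℝ) * x ^ m * Fj β (k+m) (x^2)| * (1+x)^(2*k+m+1)
        = x * ((Gc (2*k+m) k : ℝ) * x ^ m * |Fj β (k+m) (x^2)|) * (1+x)^(2*k+m+1) := by
          rw [abs_mul, abs_mul, abs_of_nonneg hc, abs_of_nonneg (pow_nonneg hx m)]
      _ ≤ x * ((Gc (2*k+m) k : ℝ) * x ^ m * (Real.exp 1 * ((k+m)! : ℝ) / (1+x^2)^(k+m+1)))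
            * (1+x)^(2*k+m+1) := by
          apply mul_le_mul_of_nonneg_right _ (by positivity)
          apply mul_le_mul_of_nonneg_left _ hx
          exact mul_le_mul_of_nonneg_left hF (by positivity)
      _ = (Real.exp 1 * ((k+m)! : ℝ) * (Gc (2*k+m) k : ℝ))
            * (x^(m+1) * (1+x)^(2*k+m+1) / (1+x^2)^(k+m+1)) := by ring
      _ ≤ (Real.exp 1 * ((k+m)! : ℝ) * (Gc (2*k+m) k : ℝ)) * (1.21^(m+1) * 2^k) := by
          apply mul_le_mul_of_nonneg_left _ (by positivity)
          rw [div_le_iff₀ hP]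
          exact core1 hx k m
      _ = Real.exp 1 * (((Gc (2*k+m) k) * (k+m)! : ℕ) : ℝ) * (1.21^(m+1) * 2^k) := by
          push_cast; ring
      _ = Real.exp 1 * (((2*k+m)! : ℝ) * (((k+m).choose k : ℕ) : ℝ) * 2^m)
            * (1.21^(m+1) * 2^k) := by
          rw [Gc_fact]; push_cast; ring
      _ ≤ Real.exp 1 * (((2*k+m)! : ℝ) * (((2*k+m).choose k : ℕ) : ℝ) * 2^m)
            * (1.21^(m+1) * 2^k) := by
          apply mul_le_mul_of_nonneg_right _ (by positivity)
          apply mul_le_mul_of_nonneg_left _ (Real.exp_pos 1).le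
          apply mul_le_mul_of_nonneg_right _ (by positivity)
          apply mul_le_mul_of_nonneg_left _ (by positivity)
          exact_mod_cast Nat.choose_le_choose k (show k+m ≤ 2*k+m by omega)
      _ = Real.exp 1 * (((2*k+m)! ) : ℝ)
            * (1.21 * ((2/2.42)^k * 2.42^(k+m) * ((2*k+m).choose k : ℝ))) := by
          have l1 := lit1 k m
          calc Real.exp 1 * (((2*k+m)! : ℝ) * (((2*k+m).choose k : ℕ) : ℝ) * 2^m)
                * (1.21^(m+1) * 2^k)
              = Real.exp 1 * (((2*k+m)!) : ℝ)
                * ((1.21^(m+1) * 2^k * 2^m) * ((2*k+m).choose k : ℝ)) := by ring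
            _ = Real.exp 1 * (((2*k+m)!) : ℝ)
                * (1.21 * ((2/2.42)^k * 2.42^(k+m) * ((2*k+m).choose k : ℝ))) := by
                rw [← l1]; ring
  · rw [Gc_zero hlt]
    simp only [Nat.cast_zero, zero_mul, abs_zero, mul_zero]
    positivity

lemma lit2 (k m : ℕ) : ((2:ℝ)/2.42)^k * 2.42^(k+m) * 2 = 1.21^m * 2^(k+1) * 2^m := by
  rw [div_pow, pow_add, show (2.42:ℝ) = 2*1.21 by norm_num, mul_pow, mul_pow]
  have h2 : ((2:ℝ)*1.21)^k ≠ 0 := by norm_num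
  field_simp
  ring

lemma term2 {β : ℝ} (hβ : 0 ≤ β) (w k : ℕ) {x : ℝ} (hx : 0 ≤ x) :
    |(Gc w k : ℝ) * x ^ (w - 2*k) * Fj β (w-k) (x^2)| * (1+x)^(w+2)
      ≤ Real.exp 1 * ((w)! : ℝ) * (2 * ((2/2.42)^k * 2.42^(w-k) * (w.choose k : ℝ))) := by
  rcases le_or_gt (2*k) w with hle | hlt
  · obtain ⟨m, rfl⟩ : ∃ m, w = 2*k + m := ⟨w - 2*k, by omega⟩
    rw [show 2*k+m - 2*k = m by omega, show 2*k+m - k = k+m by omega]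
    have hP : (0:ℝ) < (1+x^2)^(k+m+1) := by positivity
    have hF : |Fj β (k+m) (x^2)| ≤ Real.exp 1 * ((k+m)! : ℝ) / (1+x^2)^(k+m+1) :=
      Fj_bound hβ (k+m) (by positivity)
    have hc : (0:ℝ) ≤ (Gc (2*k+m) k : ℝ) := Nat.cast_nonneg _
    calc |(Gc (2*k+m) k : ℝ) * x ^ m * Fj β (k+m) (x^2)| * (1+x)^(2*k+m+2)
        = ((Gc (2*k+m) k : ℝ) * x ^ m * |Fj β (k+m) (x^2)|) * (1+x)^(2*k+m+2) := by
          rw [abs_mul, abs_mul, abs_of_nonneg hc, abs_of_nonneg (pow_nonneg hx m)]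
      _ ≤ ((Gc (2*k+m) k : ℝ) * x ^ m * (Real.exp 1 * ((k+m)! : ℝ) / (1+x^2)^(k+m+1)))
            * (1+x)^(2*k+m+2) := by
          apply mul_le_mul_of_nonneg_right _ (by positivity)
          exact mul_le_mul_of_nonneg_left hF (by positivity)
      _ = (Real.exp 1 * ((k+m)! : ℝ) * (Gc (2*k+m) k : ℝ))
            * (x^m * (1+x)^(2*k+m+2) / (1+x^2)^(k+m+1)) := by ring
      _ ≤ (Real.exp 1 * ((k+m)! : ℝ) * (Gc (2*k+m) k : ℝ)) * (1.21^m * 2^(k+1)) := by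
          apply mul_le_mul_of_nonneg_left _ (by positivity)
          rw [div_le_iff₀ hP]
          exact core2 hx k m
      _ = Real.exp 1 * (((Gc (2*k+m) k) * (k+m)! : ℕ) : ℝ) * (1.21^m * 2^(k+1)) := by
          push_cast; ring
      _ = Real.exp 1 * (((2*k+m)! : ℝ) * (((k+m).choose k : ℕ) : ℝ) * 2^m)
            * (1.21^m * 2^(k+1)) := by
          rw [Gc_fact]; push_cast; ring
      _ ≤ Real.exp 1 * (((2*k+m)! : ℝ) * (((2*k+m).choose k : ℕ) : ℝ) * 2^m)
            * (1.21^m * 2^(k+1)) := by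
          apply mul_le_mul_of_nonneg_right _ (by positivity)
          apply mul_le_mul_of_nonneg_left _ (Real.exp_pos 1).le
          apply mul_le_mul_of_nonneg_right _ (by positivity)
          apply mul_le_mul_of_nonneg_left _ (by positivity)
          exact_mod_cast Nat.choose_le_choose k (show k+m ≤ 2*k+m by omega)
      _ = Real.exp 1 * (((2*k+m)!) : ℝ)
            * (2 * ((2/2.42)^k * 2.42^(k+m) * ((2*k+m).choose k : ℝ))) := by
          have l2 := lit2 k m
          calc Real.exp 1 * (((2*k+m)! : ℝ) * (((2*k+m).choose k : ℕ) : ℝ) * 2^m)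
                * (1.21^m * 2^(k+1))
              = Real.exp 1 * (((2*k+m)!) : ℝ)
                * ((1.21^m * 2^(k+1) * 2^m) * ((2*k+m).choose k : ℝ)) := by ring
            _ = Real.exp 1 * (((2*k+m)!) : ℝ)
                * (2 * ((2/2.42)^k * 2.42^(k+m) * ((2*k+m).choose k : ℝ))) := by
                rw [← l2]; ring
  · rw [Gc_zero hlt]
    simp only [Nat.cast_zero, zero_mul, abs_zero, mul_zero]
    positivity

lemma U1 {β : ℝ} (hβ : 0 ≤ β) (w : ℕ) {x : ℝ} (hx : 0 ≤ x) :
    x * |Gf β w x| * (1+x)^(w+1)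
      ≤ Real.exp 1 * ((w)! : ℝ) * (1.21 * (2/2.42 + 2.42)^w) := by
  have habs : |Gf β w x| ≤ ∑ k ∈ Finset.range (w+1),
      |(Gc w k : ℝ) * x ^ (w - 2*k) * Fj β (w-k) (x^2)| :=
    Finset.abs_sum_le_sum_abs _ _
  calc x * |Gf β w x| * (1+x)^(w+1)
      ≤ x * (∑ k ∈ Finset.range (w+1),
          |(Gc w k : ℝ) * x ^ (w - 2*k) * Fj β (w-k) (x^2)|) * (1+x)^(w+1) := by
        apply mul_le_mul_of_nonneg_right _ (by positivity)
        exact mul_le_mul_of_nonneg_left habs hx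
    _ = ∑ k ∈ Finset.range (w+1),
        x * |(Gc w k : ℝ) * x ^ (w - 2*k) * Fj β (w-k) (x^2)| * (1+x)^(w+1) := by
        rw [Finset.mul_sum, Finset.sum_mul]
    _ ≤ ∑ k ∈ Finset.range (w+1),
        Real.exp 1 * ((w)! : ℝ) * (1.21 * ((2/2.42)^k * 2.42^(w-k) * (w.choose k : ℝ))) :=
        Finset.sum_le_sum (fun k _ => term1 hβ w k hx)
    _ = (Real.exp 1 * ((w)! : ℝ) * 1.21) * ∑ k ∈ Finset.range (w+1),
        ((2/2.42:ℝ))^k * 2.42^(w-k) * (w.choose k : ℝ) := by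
        rw [Finset.mul_sum]
        apply Finset.sum_congr rfl
        intro k _; ring
    _ = Real.exp 1 * ((w)! : ℝ) * (1.21 * (2/2.42 + 2.42)^w) := by
        rw [add_pow]
        ring

lemma U2 {β : ℝ} (hβ : 0 ≤ β) (w : ℕ) {x : ℝ} (hx : 0 ≤ x) :
    |Gf β w x| * (1+x)^(w+2)
      ≤ Real.exp 1 * ((w)! : ℝ) * (2 * (2/2.42 + 2.42)^w) := by
  have habs : |Gf β w x| ≤ ∑ k ∈ Finset.range (w+1),
      |(Gc w k : ℝ) * x ^ (w - 2*k) * Fj β (w-k) (x^2)| :=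
    Finset.abs_sum_le_sum_abs _ _
  calc |Gf β w x| * (1+x)^(w+2)
      ≤ (∑ k ∈ Finset.range (w+1),
          |(Gc w k : ℝ) * x ^ (w - 2*k) * Fj β (w-k) (x^2)|) * (1+x)^(w+2) := by
        apply mul_le_mul_of_nonneg_right habs (by positivity)
    _ = ∑ k ∈ Finset.range (w+1),
        |(Gc w k : ℝ) * x ^ (w - 2*k) * Fj β (w-k) (x^2)| * (1+x)^(w+2) := by
        rw [Finset.sum_mul]
    _ ≤ ∑ k ∈ Finset.range (w+1),
        Real.exp 1 * ((w)! : ℝ) * (2 * ((2/2.42)^k * 2.42^(w-k) * (w.choose k : ℝ))) :=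
        Finset.sum_le_sum (fun k _ => term2 hβ w k hx)
    _ = (Real.exp 1 * ((w)! : ℝ) * 2) * ∑ k ∈ Finset.range (w+1),
        ((2/2.42:ℝ))^k * 2.42^(w-k) * (w.choose k : ℝ) := by
        rw [Finset.mul_sum]
        apply Finset.sum_congr rfl
        intro k _; ring
    _ = Real.exp 1 * ((w)! : ℝ) * (2 * (2/2.42 + 2.42)^w) := by
        rw [add_pow]
        ring

theorem stmt_19 (β : ℝ) (hβ0 : 0 ≤ β) (hβ1 : β ≤ 1) (w : ℕ) (C : ℝ) (hC : 1 < C)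
    (x : ℝ) (hx : 0 ≤ x) :
    |iteratedDeriv w
        (fun t : ℝ => if t = 0 then 0
          else (Real.exp (-β * t ^ 2) - Real.exp (-t ^ 2)) / t) x| <
      (w.factorial : ℝ) * Real.exp 1 * (C + 1) *
        (2 * Real.sqrt (Real.exp 1) * C) ^ w / (1 + x) ^ (w + 1) := by
  have heq : iteratedDeriv w
      (fun t : ℝ => if t = 0 then 0
        else (Real.exp (-β * t ^ 2) - Real.exp (-t ^ 2)) / t) x
      = x * Gf β w x + (w:ℝ) * Gf β (w-1) x := by
    rw [fun_eq hβ1, iter_h hβ0 w]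
  have h1x : (0:ℝ) < (1+x)^(w+1) := by positivity
  rw [heq, lt_div_iff₀ h1x]
  have hE : (0:ℝ) < Real.exp 1 := Real.exp_pos 1
  have hfac : (0:ℝ) < ((w)! : ℝ) := by exact_mod_cast Nat.factorial_pos w
  have hEB : (0:ℝ) ≤ 2/2.42 + 2.42 := by norm_num
  have hsqrt : (1.6487:ℝ) ≤ Real.sqrt (Real.exp 1) := by
    have h9 := Real.exp_one_gt_d9
    nlinarith [Real.sq_sqrt (le_of_lt hE), Real.sqrt_nonneg (Real.exp 1)]
  have hs0 : (0:ℝ) < Real.sqrt (Real.exp 1) := lt_of_lt_of_le (by norm_num) hsqrt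
  have key : |x * Gf β w x + (w:ℝ) * Gf β (w-1) x| * (1+x)^(w+1)
      ≤ Real.exp 1 * ((w)! : ℝ) * (2 * (2/2.42+2.42)^w) := by
    cases w with
    | zero =>
      simp only [Nat.cast_zero, zero_mul, add_zero, pow_zero, Nat.factorial_zero,
        Nat.cast_one]
      have hU := U1 hβ0 0 hx
      simp only [pow_zero, Nat.factorial_zero, Nat.cast_one] at hU
      calc |x * Gf β 0 x| * (1+x)^(0+1)
          = x * |Gf β 0 x| * (1+x)^(0+1) := by rw [abs_mul, abs_of_nonneg hx]
        _ ≤ Real.exp 1 * 1 * (1.21 * 1) := hU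
        _ ≤ Real.exp 1 * 1 * (2 * 1) := by nlinarith
    | succ n =>
      rw [Nat.add_sub_cancel]
      have hcast : (0:ℝ) ≤ ((n+1:ℕ):ℝ) := by positivity
      calc |x * Gf β (n+1) x + ((n+1:ℕ):ℝ) * Gf β n x| * (1+x)^(n+1+1)
          ≤ (x * |Gf β (n+1) x| + ((n+1:ℕ):ℝ) * |Gf β n x|) * (1+x)^(n+1+1) := by
            apply mul_le_mul_of_nonneg_right _ (by positivity)
            calc |x * Gf β (n+1) x + ((n+1:ℕ):ℝ) * Gf β n x|
                ≤ |x * Gf β (n+1) x| + |((n+1:ℕ):ℝ) * Gf β n x| := abs_add_le _ _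
              _ = x * |Gf β (n+1) x| + ((n+1:ℕ):ℝ) * |Gf β n x| := by
                  rw [abs_mul, abs_mul, abs_of_nonneg hx, abs_of_nonneg hcast]
        _ = x * |Gf β (n+1) x| * (1+x)^(n+1+1)
            + ((n+1:ℕ):ℝ) * (|Gf β n x| * (1+x)^(n+2)) := by ring
        _ ≤ Real.exp 1 * (((n+1):ℕ)! : ℝ) * (1.21 * (2/2.42+2.42)^(n+1))
            + ((n+1:ℕ):ℝ) * (Real.exp 1 * ((n)! : ℝ) * (2 * (2/2.42+2.42)^n)) :=
            add_le_add (U1 hβ0 (n+1) hx)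
              (mul_le_mul_of_nonneg_left (U2 hβ0 n hx) hcast)
        _ ≤ Real.exp 1 * (((n+1):ℕ)! : ℝ) * (2 * (2/2.42+2.42)^(n+1)) := by
            have hfs : (((n+1):ℕ)! : ℝ) = ((n+1:ℕ):ℝ) * ((n)! : ℝ) := by
              rw [Nat.factorial_succ]; push_cast; ring
            rw [hfs, pow_succ]
            have hp : (0:ℝ) ≤ (2/2.42+2.42:ℝ)^n := pow_nonneg hEB n
            have hf : (0:ℝ) < ((n)! : ℝ) := by exact_mod_cast Nat.factorial_pos n
            nlinarith [mul_pos (mul_pos hE hf) (mul_pos (by positivity : (0:ℝ) < ((n+1:ℕ):ℝ)) hE)]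
  have hCpos : (0:ℝ) < C := lt_trans one_pos hC
  have hEB2 : (2/2.42+2.42:ℝ) ≤ 2 * Real.sqrt (Real.exp 1) * C := by
    nlinarith
  have hpow : (2/2.42+2.42:ℝ)^w ≤ (2 * Real.sqrt (Real.exp 1) * C)^w :=
    pow_le_pow_left₀ hEB hEB2 w
  have hp2 : (0:ℝ) < (2 * Real.sqrt (Real.exp 1) * C)^w := by positivity
  calc |x * Gf β w x + (w:ℝ) * Gf β (w-1) x| * (1+x)^(w+1)
      ≤ Real.exp 1 * ((w)! : ℝ) * (2 * (2/2.42+2.42)^w) := key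
    _ ≤ Real.exp 1 * ((w)! : ℝ) * (2 * (2 * Real.sqrt (Real.exp 1) * C)^w) := by
        apply mul_le_mul_of_nonneg_left _ (by positivity)
        linarith
    _ < Real.exp 1 * ((w)! : ℝ) * ((C+1) * (2 * Real.sqrt (Real.exp 1) * C)^w) := by
        apply mul_lt_mul_of_pos_left _ (mul_pos hE hfac)
        exact mul_lt_mul_of_pos_right (by linarith) hp2
    _ = ((w)! : ℝ) * Real.exp 1 * (C+1) * (2 * Real.sqrt (Real.exp 1) * C)^w := by ring
end
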